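/- arXiv:2004.06167 — 4 statements merged into one kernel-verified Lean document; each statement's English description precedes it below -/
import Mathlib

section
/- Let S = {x_1, ..., x_m} ⊂ ℝ^n. The n-dimensional volume of the zonotope Z = { Σ_i λ_i x_i : λ_i ∈ [0,1] } equals Σ_{A ⊆ S, |A| = n} |det(A)|, where det(A) is the determinant of the n×n matrix whose columns are the elements of A. -/
open MeasureTheory Set

namespace Shephard

variable {n m k : ℕ}

def zono (x : Fin m → Fin n → ℝ) : Set (Fin n → ℝ) :=
  { z | ∃ lam : Fin m → ℝ, (∀ i, lam i ∈ Set.Icc (0:ℝ) 1) ∧ z = ∑ i, lam i • x i }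

noncomputable def sumdet (x : Fin m → Fin n → ℝ) : ℝ :=
  ∑ f ∈ Finset.univ.filter (fun f : Fin n → Fin m => ∀ i j : Fin n, i < j → f i < f j),
    |(Matrix.of fun i j => x (f j) i).det|

lemma sumdet_nonneg (x : Fin m → Fin n → ℝ) : 0 ≤ sumdet x :=
  Finset.sum_nonneg fun _ _ => abs_nonneg _

def zmap (x : Fin m → Fin n → ℝ) : (Fin m → ℝ) →ₗ[ℝ] (Fin n → ℝ) where
  toFun := fun lam => ∑ i, lam i • x i
  map_add' := by intro a b; simp [add_smul, Finset.sum_add_distrib]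
  map_smul' := by intro c a; simp [smul_smul, Finset.smul_sum]

lemma zono_linear_image (x : Fin m → Fin n → ℝ) (g : (Fin n → ℝ) →ₗ[ℝ] (Fin k → ℝ)) :
    g '' zono x = zono (fun i => g (x i)) := by
  ext z
  constructor
  · rintro ⟨w, ⟨lam, hlam, rfl⟩, rfl⟩
    exact ⟨lam, hlam, by simp [map_sum, _root_.map_smul]⟩
  · rintro ⟨lam, hlam, rfl⟩
    exact ⟨∑ i, lam i • x i, ⟨lam, hlam, rfl⟩, by simp [map_sum, _root_.map_smul]⟩

lemma zono_eq_image (x : Fin m → Fin n → ℝ) :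
    zono x = (zmap x) '' (Set.Icc 0 1) := by
  ext z
  simp only [zono, mem_setOf_eq, mem_image, Set.mem_Icc, zmap, LinearMap.coe_mk, AddHom.coe_mk]
  constructor
  · rintro ⟨lam, hlam, rfl⟩
    exact ⟨lam, ⟨fun i => (hlam i).1, fun i => (hlam i).2⟩, rfl⟩
  · rintro ⟨lam, ⟨h1, h2⟩, rfl⟩
    exact ⟨lam, fun i => ⟨h1 i, h2 i⟩, rfl⟩

lemma isCompact_zono (x : Fin m → Fin n → ℝ) : IsCompact (zono x) := by
  rw [zono_eq_image]
  refine IsCompact.image isCompact_Icc ?_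
  show Continuous fun lam : Fin m → ℝ => ∑ i, lam i • x i
  exact continuous_finset_sum _ fun i _ => ((continuous_apply i).smul continuous_const)

lemma convex_zono (x : Fin m → Fin n → ℝ) : Convex ℝ (zono x) := by
  rw [zono_eq_image]
  exact (convex_Icc _ _).linear_image (zmap x)

lemma zono_nonempty (x : Fin m → Fin n → ℝ) : (zono x).Nonempty :=
  ⟨∑ i, (0:ℝ) • x i, ⟨0, fun i => by simp [Set.mem_Icc], rfl⟩⟩

lemma measurableSet_zono (x : Fin m → Fin n → ℝ) : MeasurableSet (zono x) :=
  (isCompact_zono x).isClosed.measurableSet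

lemma exists_linearEquiv_apply_eq {V : Type*} [AddCommGroup V] [Module ℝ V] {v w : V}
    (hv : v ≠ 0) (hw : w ≠ 0) : ∃ e : V ≃ₗ[ℝ] V, e v = w := by
  have hv' : LinearIndepOn ℝ id ({v} : Set V) := .singleton hv
  have hw' : LinearIndepOn ℝ id ({w} : Set V) := .singleton hw
  let b := Module.Basis.extend hv'
  let c := Module.Basis.extend hw'
  classical
  let e0 := Module.Basis.indexEquiv b c
  have hvmem : v ∈ hv'.extend (Set.subset_univ _) := hv'.subset_extend _ rfl
  have hwmem : w ∈ hw'.extend (Set.subset_univ _) := hw'.subset_extend _ rfl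
  let iv : ↥(hv'.extend (Set.subset_univ _)) := ⟨v, hvmem⟩
  let iw : ↥(hw'.extend (Set.subset_univ _)) := ⟨w, hwmem⟩
  let e1 := e0.trans (Equiv.swap (e0 iv) iw)
  refine ⟨b.equiv c e1, ?_⟩
  have h1 : b iv = v := Module.Basis.extend_apply_self hv' iv
  have h2 : c iw = w := Module.Basis.extend_apply_self hw' iw
  calc (b.equiv c e1) v = (b.equiv c e1) (b iv) := by rw [h1]
    _ = c (e1 iv) := b.equiv_apply iv c e1
    _ = c iw := by simp [e1, Equiv.swap_apply_left]
    _ = w := h2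

lemma aux_Icc_add (a b : ℝ) (hab : a ≤ b) :
    image2 (· + ·) (Icc a b) (Icc (0:ℝ) 1) = Icc a (b + 1) := by
  apply Set.Subset.antisymm
  · rintro t ⟨s, hs, c, hc, rfl⟩
    exact ⟨le_add_of_le_of_nonneg hs.1 hc.1, add_le_add hs.2 hc.2⟩
  · rintro t ⟨h1, h2⟩
    refine ⟨min t b, ⟨le_min h1 hab, min_le_right _ _⟩, t - min t b, ⟨?_, ?_⟩, by ring⟩
    · simp [sub_nonneg, min_le_left]
    · rcases le_total t b with h | h
      · simp [min_eq_left h]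
      · rw [min_eq_right h]; linarith
lemma sumdet_equiv (x : Fin m → Fin n → ℝ) (e : (Fin n → ℝ) ≃ₗ[ℝ] (Fin n → ℝ)) :
    sumdet (fun i => e (x i)) =
      |LinearMap.det (e : (Fin n → ℝ) →ₗ[ℝ] (Fin n → ℝ))| * sumdet x := by
  unfold sumdet
  rw [Finset.mul_sum]
  refine Finset.sum_congr rfl fun f hf => ?_
  have h1 : ∀ v : Fin n → ℝ, e v = (LinearMap.toMatrix' (e : (Fin n → ℝ) →ₗ[ℝ] (Fin n → ℝ))).mulVec v := by
    intro v
    conv_lhs => rw [show (e v = (e : (Fin n → ℝ) →ₗ[ℝ] (Fin n → ℝ)) v) from rfl,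
      ← Matrix.toLin'_toMatrix' (e : (Fin n → ℝ) →ₗ[ℝ] (Fin n → ℝ))]
    rw [Matrix.toLin'_apply]
  have h2 : (Matrix.of fun i j => e (x (f j)) i) =
      (LinearMap.toMatrix' (e : (Fin n → ℝ) →ₗ[ℝ] (Fin n → ℝ))) *
        (Matrix.of fun i j => x (f j) i) := by
    ext i j
    rw [Matrix.mul_apply]
    simp only [Matrix.of_apply, h1, Matrix.mulVec, dotProduct]
  rw [h2, Matrix.det_mul, abs_mul, ← LinearMap.det_toMatrix']

lemma volume_zono_equiv (x : Fin m → Fin n → ℝ) (e : (Fin n → ℝ) ≃ₗ[ℝ] (Fin n → ℝ)) :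
    volume (zono (fun i => e (x i))) =
      ENNReal.ofReal |LinearMap.det (e : (Fin n → ℝ) →ₗ[ℝ] (Fin n → ℝ))| * volume (zono x) := by
  have h := zono_linear_image x (e : (Fin n → ℝ) →ₗ[ℝ] (Fin n → ℝ))
  simp only [LinearEquiv.coe_coe] at h
  rw [← h]
  exact Measure.addHaar_image_linearMap volume _ _

lemma sweep {n' : ℕ} (K : Set (Fin (n'+1) → ℝ)) (hK : IsCompact K) (hKc : Convex ℝ K) :
    volume ((fun p : (Fin (n'+1) → ℝ) × ℝ => p.1 + p.2 • (Pi.single (Fin.last n') 1 : Fin (n'+1) → ℝ)) ''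
        (K ×ˢ Icc (0:ℝ) 1)) =
      volume K + volume ((fun z : Fin (n'+1) → ℝ => (Fin.last n').removeNth z) '' K) := by
  set en : Fin (n'+1) → ℝ := Pi.single (Fin.last n') 1 with hen
  set F : (Fin (n'+1) → ℝ) →ₗ[ℝ] ℝ × (Fin n' → ℝ) :=
    LinearMap.prod (LinearMap.proj (Fin.last n'))
      (LinearMap.pi fun j => LinearMap.proj ((Fin.last n').succAbove j)) with hF
  have hFcont : Continuous F := F.continuous_of_finiteDimensional
  have hFen : F en = (1, 0) := by
    refine Prod.ext ?_ ?_
    · simp [hF, hen]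
    · funext j
      simp [hF, hen, Fin.succAbove_last, Pi.single_eq_of_ne (Fin.castSucc_lt_last j).ne]
  set S1 := (fun p : (Fin (n'+1) → ℝ) × ℝ => p.1 + p.2 • en) '' (K ×ˢ Icc (0:ℝ) 1) with hS1
  have hS1c : IsCompact S1 :=
    (hK.prod isCompact_Icc).image (continuous_fst.add (continuous_snd.smul continuous_const))
  set T := F '' K with hT
  set T1 := F '' S1 with hT1
  have hTc : IsCompact T := hK.image hFcont
  have hT1c : IsCompact T1 := hS1c.image hFcont
  have hTconv : Convex ℝ T := hKc.linear_image F
  have hmp := volume_preserving_piFinSuccAbove (fun _ : Fin (n'+1) => ℝ) (Fin.last n')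
  have hFim : ∀ A : Set (Fin (n'+1) → ℝ), MeasurableSet A → volume (F '' A) = volume A := by
    intro A hA
    have h1 : F '' A =
        (MeasurableEquiv.piFinSuccAbove (fun _ : Fin (n'+1) => ℝ) (Fin.last n')) '' A := rfl
    rw [h1, MeasurableEquiv.image_eq_preimage_symm]
    exact (hmp.symm _).measure_preimage hA.nullMeasurableSet
  set A : (Fin n' → ℝ) → Set ℝ := fun y => (fun t => (t, y)) ⁻¹' T with hA
  set P : Set (Fin n' → ℝ) := Prod.snd '' T with hP
  have hPc : IsCompact P := hTc.image continuous_snd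
  have hT1sec : ∀ y, ((fun t => (t, y)) ⁻¹' T1) = image2 (· + ·) (A y) (Icc (0:ℝ) 1) := by
    intro y
    ext t
    constructor
    · rintro ⟨z, ⟨⟨w, c⟩, ⟨hw, hc⟩, rfl⟩, hz⟩
      have hsplit : F (w + c • en) = F w + c • ((1:ℝ), (0 : Fin n' → ℝ)) := by
        rw [map_add, LinearMap.map_smul, hFen]
      rw [hsplit] at hz
      have h2 : (F w).2 = y := by
        have := congrArg Prod.snd hz; simpa using this
      have h1 : (F w).1 + c = t := by
        have := congrArg Prod.fst hz; simpa using this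
      refine ⟨(F w).1, ?_, c, hc, h1⟩
      show ((F w).1, y) ∈ T
      rw [← h2]
      exact ⟨w, hw, rfl⟩
    · rintro ⟨s, hs, c, hc, rfl⟩
      obtain ⟨w, hw, hws⟩ := hs
      refine ⟨w + c • en, ⟨⟨w, c⟩, ⟨hw, hc⟩, rfl⟩, ?_⟩
      show F (w + c • en) = (s + c, y)
      rw [map_add, LinearMap.map_smul, hFen, hws]
      have : (fun t => (t, y)) s = ((s:ℝ), y) := rfl
      rw [this]
      ext <;> simp
  have hsecvol : ∀ y, volume ((fun t => (t, y)) ⁻¹' T1) = volume (A y) + P.indicator 1 y := by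
    intro y
    rw [hT1sec y]
    by_cases hy : y ∈ P
    · obtain ⟨q, hq, hqy⟩ := id hy
      have hAne : (A y).Nonempty := ⟨q.1, by show (q.1, y) ∈ T; rw [← hqy]; exact hq⟩
      have hAcl : IsClosed (A y) := hTc.isClosed.preimage (Continuous.prodMk_left y)
      have hAcomp : IsCompact (A y) := by
        refine IsCompact.of_isClosed_subset (hTc.image continuous_fst) hAcl ?_
        intro t ht; exact ⟨(t, y), ht, rfl⟩
      have hAconv : Convex ℝ (A y) := by
        intro t1 h1 t2 h2 a b ha hb hab
        have hmem := hTconv h1 h2 ha hb hab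
        have h3 : a • ((t1 : ℝ), y) + b • ((t2 : ℝ), y) = (a • t1 + b • t2, y) := by
          rw [Prod.smul_mk, Prod.smul_mk, Prod.mk_add_mk, Convex.combo_self hab y]
        rw [h3] at hmem
        exact hmem
      have hicc : A y = Icc (sInf (A y)) (sSup (A y)) :=
        eq_Icc_of_connected_compact ⟨hAne, hAconv.isPreconnected⟩ hAcomp
      have hle : sInf (A y) ≤ sSup (A y) :=
        csInf_le_csSup hAne hAcomp.bddBelow hAcomp.bddAbove
      rw [hicc, aux_Icc_add _ _ hle, Real.volume_Icc, Real.volume_Icc,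
        Set.indicator_of_mem hy]
      rw [show sSup (A y) + 1 - sInf (A y) = (sSup (A y) - sInf (A y)) + 1 by ring,
        ENNReal.ofReal_add (by linarith) zero_le_one, ENNReal.ofReal_one]
      rfl
    · have hAe : A y = ∅ := by
        by_contra h
        obtain ⟨s, hs⟩ := Set.nonempty_iff_ne_empty.mpr h
        exact hy ⟨(s, y), hs, rfl⟩
      rw [hAe, Set.image2_empty_left]
      simp [Set.indicator_of_notMem hy]
  have hS1m : MeasurableSet S1 := hS1c.isClosed.measurableSet
  have hKm : MeasurableSet K := hK.isClosed.measurableSet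
  have hT1m : MeasurableSet T1 := hT1c.isClosed.measurableSet
  have hTm : MeasurableSet T := hTc.isClosed.measurableSet
  have hPm : MeasurableSet P := hPc.isClosed.measurableSet
  have e1 : volume T1 = ∫⁻ y, (volume (A y) + P.indicator 1 y) := by
    rw [Measure.volume_eq_prod, Measure.prod_apply_symm hT1m]
    exact lintegral_congr hsecvol
  have e2 : volume T = ∫⁻ y, volume (A y) := by
    rw [Measure.volume_eq_prod, Measure.prod_apply_symm hTm]
  have hPeq : P = (fun z : Fin (n'+1) → ℝ => (Fin.last n').removeNth z) '' K := by
    rw [hP, hT, ← Set.image_comp]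
    rfl
  rw [← hFim S1 hS1m, ← hFim K hKm, ← hT1, ← hT, ← hPeq, e1,
    lintegral_add_right _ (measurable_one.indicator hPm), ← e2,
    lintegral_indicator hPm]
  simp

lemma det_last_col {n' : ℕ} (A : Matrix (Fin (n'+1)) (Fin (n'+1)) ℝ)
    (hA : ∀ i, A i (Fin.last n') = (Pi.single (Fin.last n') 1 : Fin (n'+1) → ℝ) i) :
    A.det = (A.submatrix Fin.castSucc Fin.castSucc).det := by
  rw [Matrix.det_succ_column A (Fin.last n')]
  rw [Finset.sum_eq_single (Fin.last n')]
  · rw [hA (Fin.last n')]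
    simp [Fin.succAbove_last, Even.neg_one_pow (⟨n', rfl⟩ : Even (n' + n'))]
  · intro i _ hi
    rw [hA i, Pi.single_eq_of_ne hi]
    ring
  · intro h; exact absurd (Finset.mem_univ _) h

lemma sum_B1 {n m : ℕ} (F : (Fin n → Fin (m+1)) → ℝ) :
    ∑ f ∈ Finset.univ.filter (fun f : Fin n → Fin (m+1) =>
        (∀ i j, i < j → f i < f j) ∧ ∀ j, f j ≠ Fin.last m), F f
      = ∑ g ∈ Finset.univ.filter (fun g : Fin n → Fin m =>
          ∀ i j, i < j → g i < g j), F (fun j => (g j).castSucc) := by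
  symm
  refine Finset.sum_bij (fun g _ => fun j => (g j).castSucc) ?_ ?_ ?_ ?_
  · intro g hg
    rw [Finset.mem_filter] at hg ⊢
    refine ⟨Finset.mem_univ _, fun i j hij => ?_, fun j => (Fin.castSucc_lt_last _).ne⟩
    exact Fin.castSucc_lt_castSucc_iff.mpr (hg.2 i j hij)
  · intro g1 h1 g2 h2 he
    funext j
    exact Fin.castSucc_injective m (congrFun he j)
  · intro f hf
    rw [Finset.mem_filter] at hf
    refine ⟨fun j => (f j).castPred (hf.2.2 j), Finset.mem_filter.mpr ⟨Finset.mem_univ _, ?_⟩, ?_⟩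
    · intro i j hij
      have := hf.2.1 i j hij
      simp only [Fin.lt_def, Fin.coe_castPred] at this ⊢
      exact this
    · funext j
      simp [Fin.castSucc_castPred]
  · intro g hg; rfl

lemma sum_B2 {n' m : ℕ} (F : (Fin (n'+1) → Fin (m+1)) → ℝ) :
    ∑ f ∈ Finset.univ.filter (fun f : Fin (n'+1) → Fin (m+1) =>
        (∀ i j, i < j → f i < f j) ∧ f (Fin.last n') = Fin.last m), F f
      = ∑ g ∈ Finset.univ.filter (fun g : Fin n' → Fin m =>
          ∀ i j, i < j → g i < g j),
          F (fun j => Fin.lastCases (Fin.last m) (fun j' => (g j').castSucc) j) := by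
  symm
  refine Finset.sum_bij
    (fun g _ => fun j => Fin.lastCases (Fin.last m) (fun j' => (g j').castSucc) j) ?_ ?_ ?_ ?_
  · intro g hg
    rw [Finset.mem_filter] at hg ⊢
    refine ⟨Finset.mem_univ _, fun i j hij => ?_, by simp⟩
    rcases Fin.eq_castSucc_or_eq_last j with ⟨j', rfl⟩ | rfl
    · have hi' : i < Fin.last n' := lt_trans hij (Fin.castSucc_lt_last j')
      obtain ⟨i', rfl⟩ := Fin.exists_castSucc_eq.mpr hi'.ne
      simp only [Fin.lastCases_castSucc]
      exact Fin.castSucc_lt_castSucc_iff.mpr (hg.2 i' j' (Fin.castSucc_lt_castSucc_iff.mp hij))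
    · obtain ⟨i', rfl⟩ := Fin.exists_castSucc_eq.mpr hij.ne
      simp only [Fin.lastCases_castSucc, Fin.lastCases_last]
      exact Fin.castSucc_lt_last _
  · intro g1 h1 g2 h2 he
    funext j
    have := congrFun he j.castSucc
    simp only [Fin.lastCases_castSucc] at this
    exact Fin.castSucc_injective m this
  · intro f hf
    rw [Finset.mem_filter] at hf
    have hne : ∀ j : Fin n', f j.castSucc ≠ Fin.last m := by
      intro j
      have h1 : f j.castSucc < f (Fin.last n') := hf.2.1 _ _ (Fin.castSucc_lt_last j)
      rw [hf.2.2] at h1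
      exact h1.ne
    refine ⟨fun j => (f j.castSucc).castPred (hne j),
      Finset.mem_filter.mpr ⟨Finset.mem_univ _, ?_⟩, ?_⟩
    · intro i j hij
      have := hf.2.1 i.castSucc j.castSucc (Fin.castSucc_lt_castSucc_iff.mpr hij)
      simp only [Fin.lt_def, Fin.coe_castPred] at this ⊢
      exact this
    · funext j
      rcases Fin.eq_castSucc_or_eq_last j with ⟨j', rfl⟩ | rfl
      · simp [Fin.castSucc_castPred]
      · simp [hf.2.2]
  · intro g hg; rfl

lemma sumdet_succ {n' m' : ℕ} (x : Fin (m'+1) → Fin (n'+1) → ℝ)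
    (hx : x (Fin.last m') = Pi.single (Fin.last n') 1) :
    sumdet x = sumdet (fun i => x i.castSucc)
      + sumdet (fun i => (Fin.last n').removeNth (x i.castSucc)) := by
  unfold sumdet
  rw [← Finset.sum_filter_add_sum_filter_not
    (Finset.univ.filter (fun f : Fin (n'+1) → Fin (m'+1) => ∀ i j, i < j → f i < f j))
    (fun f => f (Fin.last n') = Fin.last m'), Finset.filter_filter, Finset.filter_filter]
  rw [add_comm]
  congr 1
  · -- not-last part
    have hcongr : Finset.univ.filter (fun f : Fin (n'+1) → Fin (m'+1) =>
          (∀ i j, i < j → f i < f j) ∧ ¬f (Fin.last n') = Fin.last m')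
        = Finset.univ.filter (fun f : Fin (n'+1) → Fin (m'+1) =>
          (∀ i j, i < j → f i < f j) ∧ ∀ j, f j ≠ Fin.last m') := by
      apply Finset.filter_congr
      intro f _
      constructor
      · rintro ⟨hsm, hlast⟩
        refine ⟨hsm, fun j => ?_⟩
        rcases Fin.eq_castSucc_or_eq_last j with ⟨j', rfl⟩ | rfl
        · have h1 : f j'.castSucc < f (Fin.last n') := hsm _ _ (Fin.castSucc_lt_last j')
          intro hc
          rw [hc] at h1
          exact absurd (Fin.le_last _) (not_le.mpr h1)
        · exact hlast
      · rintro ⟨hsm, hall⟩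
        exact ⟨hsm, hall _⟩
    rw [hcongr, sum_B1 (fun f => |(Matrix.of fun i j => x (f j) i).det|)]
  · -- last part
    rw [sum_B2 (fun f => |(Matrix.of fun i j => x (f j) i).det|)]
    refine Finset.sum_congr rfl fun g hg => ?_
    congr 1
    have hdet := det_last_col (Matrix.of fun i j =>
        x (Fin.lastCases (Fin.last m') (fun j' => (g j').castSucc) j) i) ?_
    · rw [hdet]
      congr 1
      ext i j
      simp [Fin.removeNth, Fin.succAbove_last]
    · intro i
      simp [hx]

lemma sumdet_succ_zero {n' m' : ℕ} (x : Fin (m'+1) → Fin (n'+1) → ℝ)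
    (hx : x (Fin.last m') = 0) :
    sumdet x = sumdet (fun i => x i.castSucc) := by
  unfold sumdet
  rw [← Finset.sum_filter_add_sum_filter_not
    (Finset.univ.filter (fun f : Fin (n'+1) → Fin (m'+1) => ∀ i j, i < j → f i < f j))
    (fun f => f (Fin.last n') = Fin.last m'), Finset.filter_filter, Finset.filter_filter]
  have hzero : ∑ f ∈ Finset.univ.filter (fun f : Fin (n'+1) → Fin (m'+1) =>
      (∀ i j, i < j → f i < f j) ∧ f (Fin.last n') = Fin.last m'),
      |(Matrix.of fun i j => x (f j) i).det| = 0 := by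
    refine Finset.sum_eq_zero fun f hf => ?_
    rw [Finset.mem_filter] at hf
    have : (Matrix.of fun i j => x (f j) i).det = 0 := by
      apply Matrix.det_eq_zero_of_column_eq_zero (Fin.last n')
      intro i
      simp [hf.2.2, hx]
    rw [this, abs_zero]
  rw [hzero, zero_add]
  have hcongr : Finset.univ.filter (fun f : Fin (n'+1) → Fin (m'+1) =>
        (∀ i j, i < j → f i < f j) ∧ ¬f (Fin.last n') = Fin.last m')
      = Finset.univ.filter (fun f : Fin (n'+1) → Fin (m'+1) =>
        (∀ i j, i < j → f i < f j) ∧ ∀ j, f j ≠ Fin.last m') := by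
    apply Finset.filter_congr
    intro f _
    constructor
    · rintro ⟨hsm, hlast⟩
      refine ⟨hsm, fun j => ?_⟩
      rcases Fin.eq_castSucc_or_eq_last j with ⟨j', rfl⟩ | rfl
      · have h1 : f j'.castSucc < f (Fin.last n') := hsm _ _ (Fin.castSucc_lt_last j')
        intro hc
        rw [hc] at h1
        exact absurd (Fin.le_last _) (not_le.mpr h1)
      · exact hlast
    · rintro ⟨hsm, hall⟩
      exact ⟨hsm, hall _⟩
  rw [hcongr, sum_B1 (fun f => |(Matrix.of fun i j => x (f j) i).det|)]

lemma zono_succ {n m : ℕ} (x : Fin (m+1) → Fin n → ℝ) :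
    zono x = (fun p : (Fin n → ℝ) × ℝ => p.1 + p.2 • x (Fin.last m)) ''
      ((zono (fun i => x i.castSucc)) ×ˢ Icc (0:ℝ) 1) := by
  ext z
  constructor
  · rintro ⟨lam, hlam, rfl⟩
    refine ⟨(∑ i : Fin m, lam i.castSucc • x i.castSucc, lam (Fin.last m)),
      ⟨⟨fun i => lam i.castSucc, fun i => hlam _, rfl⟩, hlam _⟩, ?_⟩
    simp only
    rw [Fin.sum_univ_castSucc]
  · rintro ⟨⟨w, c⟩, ⟨⟨lam', hlam', rfl⟩, hc⟩, rfl⟩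
    refine ⟨Fin.snoc lam' c, fun i => ?_, ?_⟩
    · rcases Fin.eq_castSucc_or_eq_last i with ⟨j, rfl⟩ | rfl
      · rw [Fin.snoc_castSucc]; exact hlam' j
      · rw [Fin.snoc_last]; exact hc
    · simp only [Fin.sum_univ_castSucc, Fin.snoc_castSucc, Fin.snoc_last]

theorem key : ∀ (n m : ℕ) (x : Fin m → Fin n → ℝ),
    volume (zono x) = ENNReal.ofReal (sumdet x) := by
  intro n
  induction n with
  | zero =>
    intro m x
    have h1 : zono x = Set.univ := by
      apply Set.eq_univ_of_forall
      intro z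
      exact ⟨0, fun i => by simp, Subsingleton.elim _ _⟩
    have h2 : sumdet x = 1 := by
      unfold sumdet
      have hfil : Finset.univ.filter (fun f : Fin 0 → Fin m => ∀ i j : Fin 0, i < j → f i < f j)
          = Finset.univ := Finset.filter_true_of_mem (fun f _ => fun i => i.elim0)
      have hdet : ∀ f : Fin 0 → Fin m, |(Matrix.of fun i j => x (f j) i).det| = 1 := by
        intro f
        rw [show (Matrix.of fun (i j : Fin 0) => x (f j) i).det = 1 from Matrix.det_fin_zero]
        norm_num
      rw [hfil, Finset.sum_congr rfl fun f _ => hdet f, Finset.sum_const, Finset.card_univ]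
      simp
    rw [h1, h2, ENNReal.ofReal_one, MeasureTheory.volume_pi, Measure.pi_univ]
    simp
  | succ n' ihn =>
    intro m
    induction m with
    | zero =>
      intro x
      have h1 : zono x = {0} := by
        ext z
        constructor
        · rintro ⟨lam, _, rfl⟩
          simp
        · rintro rfl
          exact ⟨fun i => i.elim0, fun i => i.elim0, by simp⟩
      have h2 : sumdet x = 0 := by
        unfold sumdet
        exact Finset.sum_eq_zero fun f _ => ((f 0).elim0)
      have h3 : volume ({0} : Set (Fin (n'+1) → ℝ)) = 0 := by
        have := Measure.addHaar_submodule (volume : Measure (Fin (n'+1) → ℝ)) ⊥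
          bot_ne_top
        simpa using this
      rw [h1, h2, h3, ENNReal.ofReal_zero]
    | succ m' ihm =>
      intro x
      by_cases hv : x (Fin.last m') = 0
      · rw [zono_succ x, sumdet_succ_zero x hv, hv]
        have himg : (fun p : (Fin (n'+1) → ℝ) × ℝ => p.1 + p.2 • (0 : Fin (n'+1) → ℝ)) ''
            ((zono (fun i => x i.castSucc)) ×ˢ Icc (0:ℝ) 1) = zono (fun i => x i.castSucc) := by
          ext z
          constructor
          · rintro ⟨⟨w, c⟩, ⟨hw, _⟩, rfl⟩
            simpa using hw
          · intro hz
            exact ⟨(z, 0), ⟨hz, by norm_num⟩, by simp⟩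
        rw [himg]
        exact ihm _
      · have hen : (Pi.single (Fin.last n') 1 : Fin (n'+1) → ℝ) ≠ 0 := by
          intro hc
          have := congrFun hc (Fin.last n')
          simp at this
        obtain ⟨e, he⟩ := exists_linearEquiv_apply_eq hv hen
        set x' := fun i => e (x i) with hx'
        have hx'last : x' (Fin.last m') = Pi.single (Fin.last n') 1 := he
        have hmain : volume (zono x') = ENNReal.ofReal (sumdet x') := by
          rw [sumdet_succ x' hx'last, zono_succ x', hx'last]
          rw [sweep _ (isCompact_zono _) (convex_zono _)]
          have hproj_img : (fun z : Fin (n'+1) → ℝ => (Fin.last n').removeNth z) ''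
              zono (fun i => x' i.castSucc)
              = zono (fun i => (Fin.last n').removeNth (x' i.castSucc)) := by
            exact zono_linear_image (fun i => x' i.castSucc)
              (LinearMap.pi fun j => LinearMap.proj ((Fin.last n').succAbove j))
          rw [hproj_img, ihm (fun i => x' i.castSucc),
            ihn m' (fun i => (Fin.last n').removeNth (x' i.castSucc)),
            ← ENNReal.ofReal_add (sumdet_nonneg _) (sumdet_nonneg _)]
        have hvol := volume_zono_equiv x e
        have hsum := sumdet_equiv x e
        rw [← hx'] at hvol hsum
        rw [hvol, hsum, ENNReal.ofReal_mul (abs_nonneg _)] at hmain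
        have hd : (0:ℝ) < |LinearMap.det (e : (Fin (n'+1) → ℝ) →ₗ[ℝ] (Fin (n'+1) → ℝ))| := by
          rw [abs_pos]
          exact (LinearEquiv.isUnit_det' e).ne_zero
        have h0 : ENNReal.ofReal |LinearMap.det (e : (Fin (n'+1) → ℝ) →ₗ[ℝ] (Fin (n'+1) → ℝ))| ≠ 0 := by
          simp only [ENNReal.ofReal_eq_zero, not_le, Ne]
          exact hd
        have ht : ENNReal.ofReal |LinearMap.det (e : (Fin (n'+1) → ℝ) →ₗ[ℝ] (Fin (n'+1) → ℝ))| ≠ ⊤ :=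
          ENNReal.ofReal_ne_top
        exact le_antisymm ((ENNReal.mul_le_mul_iff_right h0 ht).mp hmain.le)
          ((ENNReal.mul_le_mul_iff_right h0 ht).mp hmain.ge)

end Shephard

open Shephard

/-- Shephard: the volume of the zonotope generated by
`x_1, ..., x_m` is the sum over all `n`-element subsets of the generators of
the absolute determinant of the matrix with those columns. -/
theorem stmt6 {n m : ℕ} (x : Fin m → Fin n → ℝ) :
    volume { z : Fin n → ℝ | ∃ lam : Fin m → ℝ,
        (∀ i, lam i ∈ Set.Icc (0:ℝ) 1) ∧ z = ∑ i, lam i • x i } =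
      ENNReal.ofReal
        (∑ s ∈ (Finset.univ.powersetCard n : Finset (Finset (Fin m))).attach,
          |Matrix.det (Matrix.of fun i j : Fin n =>
            x ((s.1.orderIsoOfFin ((Finset.mem_powersetCard.mp s.2).2)) j) i)|) := by
  have h1 : { z : Fin n → ℝ | ∃ lam : Fin m → ℝ,
      (∀ i, lam i ∈ Set.Icc (0:ℝ) 1) ∧ z = ∑ i, lam i • x i } = zono x := rfl
  rw [h1, key n m x]
  congr 1
  unfold sumdet
  refine (Finset.sum_bij
    (fun (s : {a // a ∈ (Finset.univ.powersetCard n : Finset (Finset (Fin m)))}) _ =>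
      fun j : Fin n => ((s.1.orderIsoOfFin ((Finset.mem_powersetCard.mp s.2).2) j : Fin m)))
    ?_ ?_ ?_ ?_).symm
  · intro s _
    rw [Finset.mem_filter]
    refine ⟨Finset.mem_univ _, fun i j hij => ?_⟩
    simpa only [Finset.coe_orderIsoOfFin_apply] using
      (s.1.orderEmbOfFin ((Finset.mem_powersetCard.mp s.2).2)).strictMono hij
  · intro s1 h1 s2 h2 he
    apply Subtype.ext
    apply Finset.coe_injective
    rw [← Finset.range_orderEmbOfFin s1.1 ((Finset.mem_powersetCard.mp s1.2).2),
      ← Finset.range_orderEmbOfFin s2.1 ((Finset.mem_powersetCard.mp s2.2).2)]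
    have hfe : ⇑(s1.1.orderEmbOfFin ((Finset.mem_powersetCard.mp s1.2).2))
        = ⇑(s2.1.orderEmbOfFin ((Finset.mem_powersetCard.mp s2.2).2)) := by
      funext j
      have := congrFun he j
      simpa only [Finset.coe_orderIsoOfFin_apply] using this
    rw [hfe]
  · intro f hf
    rw [Finset.mem_filter] at hf
    have hsm : StrictMono f := fun a b hab => hf.2 a b hab
    have hcard : (Finset.image f Finset.univ).card = n := by
      rw [Finset.card_image_of_injective _ hsm.injective, Finset.card_univ, Fintype.card_fin]
    have hmem : Finset.image f Finset.univ ∈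
        (Finset.univ.powersetCard n : Finset (Finset (Fin m))) :=
      Finset.mem_powersetCard_univ.mpr hcard
    refine ⟨⟨Finset.image f Finset.univ, hmem⟩, Finset.mem_attach _ _, ?_⟩
    have huniq := Finset.orderEmbOfFin_unique
      ((Finset.mem_powersetCard.mp (⟨Finset.image f Finset.univ, hmem⟩ :
        {a // a ∈ (Finset.univ.powersetCard n : Finset (Finset (Fin m)))}).2).2)
      (fun j => Finset.mem_image_of_mem f (Finset.mem_univ j)) hsm
    funext j
    simp only [Finset.coe_orderIsoOfFin_apply]
    exact (congrFun huniq j).symm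
  · intro s _
    rfl
end

section
/- Let G = (V, E) be a connected graph with n+1 vertices and let D : E → ℝ^n be a spanning representation mapping the edges of some fixed spanning tree to the standard basis of ℝ^n. Then for every subset A ⊆ E with |A| = n whose image {D(e) : e ∈ A} is linearly independent, A is a spanning tree of G and |det of the matrix with columns D(e), e ∈ A| = 1. Conversely, if A is a spanning tree then {D(e)} is linearly independent. -/
open MeasureTheory

namespace CreditNet

variable {V E : Type}

/-- A walk in a multigraph with edge-endpoint maps `fst`, `snd`; edges may be
traversed forwards (`fwd`) or backwards (`bwd`). -/
inductive Walk (fst snd : E → V) : V → V → Type where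
  | nil (v : V) : Walk fst snd v v
  | fwd (e : E) {y : V} (w : Walk fst snd (snd e) y) : Walk fst snd (fst e) y
  | bwd (e : E) {y : V} (w : Walk fst snd (fst e) y) : Walk fst snd (snd e) y

/-- The signed sum of a map `D` along a walk: `+D e` for forward traversal of an
edge, `-D e` for backward traversal. -/
def wsum {n : ℕ} {fst snd : E → V} (D : E → Fin n → ℝ) :
    {x y : V} → Walk fst snd x y → (Fin n → ℝ)
  | _, _, .nil _ => 0
  | _, _, .fwd e w => D e + wsum D w
  | _, _, .bwd e w => (-D e) + wsum D w

/-- One adjacency step: either an edge of `T` joins `u` and `v`, or the extra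
identification relation `R` relates them (in either order). -/
def Step (fst snd : E → V) (T : Finset E) (R : V → V → Prop) (u v : V) : Prop :=
  (∃ e ∈ T, (fst e = u ∧ snd e = v) ∨ (fst e = v ∧ snd e = u)) ∨ R u v ∨ R v u

/-- The graph restricted to edge set `T`, with vertices additionally identified
according to `R`, is connected. -/
def ConnVia (fst snd : E → V) (T : Finset E) (R : V → V → Prop) : Prop :=
  ∀ u v : V, Relation.ReflTransGen (Step fst snd T R) u v

/-- No vertex identifications. -/
def NoRel : V → V → Prop := fun _ _ => False

/-- Identify the vertices `x` and `y`. -/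
def Rid (x y : V) : V → V → Prop := fun u v => u = x ∧ v = y

/-- Identify `x` with `y` and `a` with `b`. -/
def Rid2 (x y a b : V) : V → V → Prop := fun u v => (u = x ∧ v = y) ∨ (u = a ∧ v = b)

/-- `T` is a spanning tree of the graph with vertex identifications `R`:
a minimal connecting edge set. -/
def IsSTree [DecidableEq E] (fst snd : E → V) (R : V → V → Prop) (T : Finset E) : Prop :=
  ConnVia fst snd T R ∧ ∀ e ∈ T, ¬ ConnVia fst snd (T.erase e) R

open Classical in
/-- The weighted spanning-tree generating polynomial
`Γ(c) = Σ_{T spanning tree} Π_{e ∈ T} c e` of the graph with vertex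
identifications `R`. -/
noncomputable def treePoly [Fintype E] (fst snd : E → V) (R : V → V → Prop) (c : E → ℝ) : ℝ :=
  ∑ T ∈ Finset.univ.filter (fun T => IsSTree fst snd R T), ∏ e ∈ T, c e

open Classical in
/-- A spanning representation: signed sums along closed walks vanish, and the
images of the edges of any spanning tree span `ℝ^n`. -/
def IsSpanningRep [Fintype E] {n : ℕ} (fst snd : E → V) (D : E → Fin n → ℝ) : Prop :=
  (∀ (x : V) (w : Walk fst snd x x), wsum D w = 0) ∧
  (∀ T : Finset E, IsSTree fst snd NoRel T →
    Submodule.span ℝ (Set.range fun e : T => D e.1) = (⊤ : Submodule ℝ (Fin n → ℝ)))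

/-- An escrow configuration: nonnegative, the two directions of each edge sum
to the capacity, and zero off the edges. -/
def IsConfig (fst snd : E → V) (c : E → ℝ) (w : V → V → ℝ) : Prop :=
  (∀ u v, 0 ≤ w u v) ∧
  (∀ e, w (fst e) (snd e) + w (snd e) (fst e) = c e) ∧
  (∀ u v, (¬ ∃ e, (fst e = u ∧ snd e = v) ∨ (fst e = v ∧ snd e = u)) → w u v = 0)

/-- The represented score of a configuration: sum over positively-oriented
edges of the escrow owned by the tail, times the edge direction. -/
noncomputable def score [Fintype E] {n : ℕ} (fst snd : E → V) (D : E → Fin n → ℝ)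
    (w : V → V → ℝ) : Fin n → ℝ :=
  ∑ e : E, w (fst e) (snd e) • D e

/-- Pay `k` units from `u` to `v` across the edge `(u,v)`. -/
def payEdge [DecidableEq V] (u v : V) (k : ℝ) (w : V → V → ℝ) : V → V → ℝ :=
  fun a b =>
    if a = u ∧ b = v then w a b - k
    else if a = v ∧ b = u then w a b + k else w a b

/-- Execute a payment of `k` units along each edge of a walk. -/
def exec [DecidableEq V] {fst snd : E → V} (k : ℝ) :
    {x y : V} → Walk fst snd x y → (V → V → ℝ) → (V → V → ℝ)
  | _, _, .nil _, w => w
  | _, _, .fwd e p, w => exec k p (payEdge (fst e) (snd e) k w)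
  | _, _, .bwd e p, w => exec k p (payEdge (snd e) (fst e) k w)

/-- Feasibility of paying `k` units along each edge of a walk in turn. -/
def Feasible [DecidableEq V] {fst snd : E → V} (k : ℝ) :
    {x y : V} → Walk fst snd x y → (V → V → ℝ) → Prop
  | _, _, .nil _, _ => True
  | _, _, .fwd e p, w => k ≤ w (fst e) (snd e) ∧ Feasible k p (payEdge (fst e) (snd e) k w)
  | _, _, .bwd e p, w => k ≤ w (snd e) (fst e) ∧ Feasible k p (payEdge (snd e) (fst e) k w)

/-- The zonotope (Minkowski sum of segments) generated by a family of vectors. -/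
def zonotope {ι : Type} [Fintype ι] {n : ℕ} (g : ι → Fin n → ℝ) : Set (Fin n → ℝ) :=
  { z | ∃ lam : ι → ℝ, (∀ i, lam i ∈ Set.Icc (0:ℝ) 1) ∧ z = ∑ i, lam i • g i }

end CreditNet

open CreditNet
namespace CreditNet
namespace Aux

variable {V E : Type} {fst snd : E → V}

/-- Concatenation of walks. -/
def wappend : {x y z : V} → Walk fst snd x y → Walk fst snd y z → Walk fst snd x z
  | _, _, _, .nil _, q => q
  | _, _, _, .fwd e p, q => .fwd e (wappend p q)
  | _, _, _, .bwd e p, q => .bwd e (wappend p q)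

/-- Reversal of a walk. -/
def wrev : {x y : V} → Walk fst snd x y → Walk fst snd y x
  | _, _, .nil v => .nil v
  | _, _, .fwd e p => wappend (wrev p) (.bwd e (.nil _))
  | _, _, .bwd e p => wappend (wrev p) (.fwd e (.nil _))

/-- All edges of the walk lie in `S`. -/
def WIn (S : Set E) : {x y : V} → Walk fst snd x y → Prop
  | _, _, .nil _ => True
  | _, _, .fwd e p => e ∈ S ∧ WIn S p
  | _, _, .bwd e p => e ∈ S ∧ WIn S p

variable {n : ℕ} {D : E → Fin n → ℝ}

lemma wsum_append : ∀ {x y z : V} (p : Walk fst snd x y) (q : Walk fst snd y z),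
    wsum D (wappend p q) = wsum D p + wsum D q := by
  intro x y z p q
  induction p with
  | nil => simp [wappend, wsum]
  | fwd e p ih => simp [wappend, wsum, ih, add_assoc]
  | bwd e p ih => simp [wappend, wsum, ih, add_assoc]

lemma wsum_rev : ∀ {x y : V} (p : Walk fst snd x y),
    wsum D (wrev p) = - wsum D p := by
  intro x y p
  induction p with
  | nil => simp [wrev, wsum]
  | fwd e p ih => simp [wrev, wsum_append, wsum, ih]
  | bwd e p ih => simp [wrev, wsum_append, wsum, ih]

lemma wsum_unique (hc : ∀ (x : V) (w : Walk fst snd x x), wsum D w = 0)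
    {x y : V} (p q : Walk fst snd x y) : wsum D p = wsum D q := by
  have h := hc x (wappend p (wrev q))
  rw [wsum_append, wsum_rev] at h
  have := add_neg_eq_zero.mp h
  exact this

lemma WIn_append {S : Set E} : ∀ {x y z : V} (p : Walk fst snd x y) (q : Walk fst snd y z),
    WIn S p → WIn S q → WIn S (wappend p q)
  | _, _, _, .nil _, _, _, hq => hq
  | _, _, _, .fwd e p, q, hp, hq => ⟨hp.1, WIn_append p q hp.2 hq⟩
  | _, _, _, .bwd e p, q, hp, hq => ⟨hp.1, WIn_append p q hp.2 hq⟩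

lemma step_symm {S : Finset E} {u v : V} (h : Step fst snd S NoRel u v) :
    Step fst snd S NoRel v u := by
  rcases h with ⟨e, he, h | h⟩ | h | h
  · exact Or.inl ⟨e, he, Or.inr h⟩
  · exact Or.inl ⟨e, he, Or.inl h⟩
  · exact Or.inr (Or.inr h)
  · exact Or.inr (Or.inl h)

lemma rel_symm {S : Finset E} {u v : V}
    (h : Relation.ReflTransGen (Step fst snd S NoRel) u v) :
    Relation.ReflTransGen (Step fst snd S NoRel) v u :=
  by
    haveI : Std.Symm (Step fst snd S NoRel) := ⟨fun _ _ hs => step_symm hs⟩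
    exact Std.Symm.symm _ _ h

lemma rel_of_mem {S : Finset E} {e : E} (he : e ∈ S) :
    Relation.ReflTransGen (Step fst snd S NoRel) (fst e) (snd e) :=
  Relation.ReflTransGen.single (Or.inl ⟨e, he, Or.inl ⟨rfl, rfl⟩⟩)

lemma exists_walk {S : Finset E} {u v : V}
    (h : Relation.ReflTransGen (Step fst snd S NoRel) u v) :
    ∃ w : Walk fst snd u v, WIn (S : Set E) w := by
  induction h with
  | refl => exact ⟨.nil _, trivial⟩
  | @tail b c _ hstep ih =>
      obtain ⟨w, hw⟩ := ih
      rcases hstep with ⟨e, he, ⟨h1, h2⟩ | ⟨h1, h2⟩⟩ | hF | hF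
      · subst h1; subst h2
        exact ⟨wappend w (.fwd e (.nil _)), WIn_append _ _ hw ⟨he, trivial⟩⟩
      · subst h1; subst h2
        exact ⟨wappend w (.bwd e (.nil _)), WIn_append _ _ hw ⟨he, trivial⟩⟩
      · exact (hF : False).elim
      · exact (hF : False).elim

lemma wsum_mem_span {S : Set E} : ∀ {x y : V} (w : Walk fst snd x y), WIn S w →
    wsum D w ∈ Submodule.span ℝ (D '' S) := by
  intro x y w hw
  induction w with
  | nil => exact Submodule.zero_mem _
  | fwd e p ih =>
      exact Submodule.add_mem _ (Submodule.subset_span ⟨e, hw.1, rfl⟩) (ih hw.2)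
  | bwd e p ih =>
      exact Submodule.add_mem _
        (Submodule.neg_mem _ (Submodule.subset_span ⟨e, hw.1, rfl⟩)) (ih hw.2)

lemma const_of_rel {α : Type} (g : V → α) {S : Finset E}
    (h : ∀ e ∈ S, g (fst e) = g (snd e)) {u v : V}
    (hr : Relation.ReflTransGen (Step fst snd S NoRel) u v) : g u = g v := by
  induction hr with
  | refl => rfl
  | tail _ hstep ih =>
      rcases hstep with ⟨e, he, ⟨h1, h2⟩ | ⟨h1, h2⟩⟩ | hF | hF
      · rw [ih, ← h1, ← h2]; exact h e he
      · rw [ih, ← h1, ← h2]; exact (h e he).symm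
      · exact (hF : False).elim
      · exact (hF : False).elim

lemma erase_conn [DecidableEq E] {S : Finset E} {e : E}
    (he : Relation.ReflTransGen (Step fst snd (S.erase e) NoRel) (fst e) (snd e))
    {u v : V} (h : Relation.ReflTransGen (Step fst snd S NoRel) u v) :
    Relation.ReflTransGen (Step fst snd (S.erase e) NoRel) u v := by
  induction h with
  | refl => exact Relation.ReflTransGen.refl
  | tail _ hstep ih =>
      refine ih.trans ?_
      rcases hstep with ⟨f, hf, ⟨h1, h2⟩ | ⟨h1, h2⟩⟩ | hF | hF
      · by_cases hfe : f = e
        · subst hfe; rw [← h1, ← h2]; exact he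
        · exact Relation.ReflTransGen.single
            (Or.inl ⟨f, Finset.mem_erase.mpr ⟨hfe, hf⟩, Or.inl ⟨h1, h2⟩⟩)
      · by_cases hfe : f = e
        · subst hfe; rw [← h1, ← h2]; exact rel_symm he
        · exact Relation.ReflTransGen.single
            (Or.inl ⟨f, Finset.mem_erase.mpr ⟨hfe, hf⟩, Or.inr ⟨h1, h2⟩⟩)
      · exact (hF : False).elim
      · exact (hF : False).elim

lemma tree_cut [DecidableEq E] {T : Finset E} (hT : IsSTree fst snd NoRel T)
    {e : E} (he : e ∈ T) :
    ¬ Relation.ReflTransGen (Step fst snd (T.erase e) NoRel) (fst e) (snd e) := by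
  intro hrel
  exact hT.2 e he (fun u v => erase_conn hrel (hT.1 u v))

lemma exists_potential [Nonempty V] [Fintype E]
    (hconn : ConnVia fst snd Finset.univ NoRel)
    (hc : ∀ (x : V) (w : Walk fst snd x x), wsum D w = 0) :
    ∃ φ : V → Fin n → ℝ, ∀ e : E, φ (snd e) = φ (fst e) + D e := by
  classical
  obtain ⟨r⟩ := (inferInstance : Nonempty V)
  choose w _ using fun v => exists_walk (hconn r v)
  refine ⟨fun v => wsum D (w v), fun e => ?_⟩
  show wsum D (w (snd e)) = wsum D (w (fst e)) + D e
  have h2 : wsum D (w (snd e)) = wsum D (wappend (w (fst e)) (.fwd e (.nil _))) :=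
    wsum_unique hc _ _
  rw [h2, wsum_append]
  simp [wsum]

open Classical in
/-- Cut indicator function of the tree edge `s j`. -/
noncomputable def cg (fst snd : E → V) [DecidableEq E] {n : ℕ} (T : Finset E)
    (s : Fin n → E) (j : Fin n) (v : V) : ℤ :=
  if Relation.ReflTransGen (Step fst snd (T.erase (s j)) NoRel) (snd (s j)) v then 1 else 0

/-- Signed cut coefficient of edge `e` with respect to tree edge `s j`. -/
noncomputable def cdiff (fst snd : E → V) [DecidableEq E] {n : ℕ} (T : Finset E)
    (s : Fin n → E) (j : Fin n) (e : E) : ℤ :=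
  cg fst snd T s j (snd e) - cg fst snd T s j (fst e)

lemma cg_const [DecidableEq E] {T : Finset E} {s : Fin n → E} {j : Fin n} {u v : V}
    (h : Relation.ReflTransGen (Step fst snd (T.erase (s j)) NoRel) u v) :
    cg fst snd T s j u = cg fst snd T s j v := by
  classical
  unfold cg
  by_cases h1 : Relation.ReflTransGen (Step fst snd (T.erase (s j)) NoRel) (snd (s j)) u
  · rw [if_pos h1, if_pos (h1.trans h)]
  · rw [if_neg h1, if_neg (fun h2 => h1 (h2.trans (rel_symm h)))]

lemma cdiff_self [DecidableEq E] {T : Finset E} (hT : IsSTree fst snd NoRel T)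
    {s : Fin n → E} {j : Fin n} (hmem : s j ∈ T) :
    cdiff fst snd T s j (s j) = 1 := by
  classical
  unfold cdiff cg
  rw [if_pos Relation.ReflTransGen.refl,
    if_neg (fun h => tree_cut hT hmem (rel_symm h))]
  norm_num

lemma cdiff_other [DecidableEq E] {T : Finset E} {s : Fin n → E}
    (hinj : Function.Injective s) {j k : Fin n} (hjk : j ≠ k) (hmem : s k ∈ T) :
    cdiff fst snd T s j (s k) = 0 := by
  have hk : s k ∈ T.erase (s j) :=
    Finset.mem_erase.mpr ⟨fun h => hjk (hinj h).symm, hmem⟩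
  have := cg_const (fst := fst) (snd := snd) (rel_of_mem hk) (s := s) (j := j)
  unfold cdiff
  rw [← this]
  ring

/-- Expansion of any `D e` over the images of a spanning tree, with cut
coefficients. -/
lemma expansion [DecidableEq E] [Fintype E] {T : Finset E}
    (hT : IsSTree fst snd NoRel T) {s : Fin n → E} (hinj : Function.Injective s)
    (hmem : ∀ j, s j ∈ T) (hsurj : ∀ f ∈ T, ∃ j, s j = f)
    {φ : V → Fin n → ℝ} (hφ : ∀ e : E, φ (snd e) = φ (fst e) + D e) (e : E) :
    D e = ∑ j, ((cdiff fst snd T s j e : ℤ) : ℝ) • D (s j) := by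
  classical
  set F : V → Fin n → ℝ := fun v => ∑ j, ((cg fst snd T s j v : ℤ) : ℝ) • D (s j) with hF
  have hFdiff : ∀ e' : E, F (snd e') - F (fst e') =
      ∑ j, ((cdiff fst snd T s j e' : ℤ) : ℝ) • D (s j) := by
    intro e'
    simp only [hF]
    rw [← Finset.sum_sub_distrib]
    refine Finset.sum_congr rfl (fun j _ => ?_)
    rw [cdiff]
    push_cast
    rw [sub_smul]
  have hconst : ∀ f ∈ T, (fun v => φ v - F v) (fst f) = (fun v => φ v - F v) (snd f) := by
    intro f hf
    obtain ⟨k, rfl⟩ := hsurj f hf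
    have h2 : F (snd (s k)) - F (fst (s k)) = D (s k) := by
      rw [hFdiff]
      rw [Finset.sum_eq_single k]
      · rw [cdiff_self hT (hmem k)]; simp
      · intro j _ hj
        rw [cdiff_other hinj hj (hmem k)]; simp
      · intro h; exact absurd (Finset.mem_univ k) h
    have h1 : φ (snd (s k)) = φ (fst (s k)) + D (s k) := hφ (s k)
    simp only
    linear_combination h2 - h1
  have hcc := const_of_rel (fun v => φ v - F v) hconst (hT.1 (fst e) (snd e))
  have : D e = F (snd e) - F (fst e) := by
    have h1 : φ (snd e) = φ (fst e) + D e := hφ e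
    have := hcc
    rw [h1] at this
    linear_combination - this
  rw [this, hFdiff]

end Aux
end CreditNet

/-- unimodularity: for a spanning representation mapping a fixed
spanning tree to the standard basis, an `n`-element edge set has linearly
independent image iff it is a spanning tree, in which case the matrix whose
columns are its images (in any order) has determinant of absolute value 1. -/
theorem stmt7 {V E : Type} [Fintype V] [Fintype E] [DecidableEq E]
    (fst snd : E → V) (n : ℕ) (hcard : Fintype.card V = n + 1)
    (hconn : ConnVia fst snd Finset.univ NoRel)
    (D : E → Fin n → ℝ) (hD : IsSpanningRep fst snd D)
    (T0 : Finset E) (hT0 : IsSTree fst snd NoRel T0)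
    (t : Fin n → E) (ht : Function.Injective t)
    (htT : ∀ i, t i ∈ T0) (hTt : ∀ e ∈ T0, ∃ i, t i = e)
    (hbasis : ∀ i : Fin n, D (t i) = Pi.single i 1)
    (A : Finset E) (hA : A.card = n) :
    (LinearIndependent ℝ (fun a : A => D a.1) →
      IsSTree fst snd NoRel A ∧
      ∀ en : Fin n → E, Function.Injective en → (∀ j, en j ∈ A) →
        |Matrix.det (Matrix.of fun i j : Fin n => D (en j) i)| = 1) ∧
    (IsSTree fst snd NoRel A → LinearIndependent ℝ (fun a : A => D a.1)) := by
  classical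
  have hVne : Nonempty V := Fintype.card_pos_iff.mp (by omega)
  obtain ⟨φ, hφ⟩ := Aux.exists_potential hconn hD.1
  have hfin : Module.finrank ℝ (Fin n → ℝ) = n := by simp
  have hcardA : Fintype.card A = n := by rw [Fintype.card_coe, hA]
  constructor
  · intro hli
    have hspan : Submodule.span ℝ (Set.range fun a : A => D a.1) = ⊤ :=
      hli.span_eq_top_of_card_eq_finrank' (by rw [hcardA, hfin])
    have hvanish : ∀ (c : Fin n → ℝ), (∀ e ∈ A, ∑ i, D e i * c i = 0) →
        ∀ e : E, ∑ i, D e i * c i = 0 := by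
      intro c hc e
      let L : (Fin n → ℝ) →ₗ[ℝ] ℝ :=
        { toFun := fun x => ∑ i, x i * c i
          map_add' := fun x y => by simp [add_mul, Finset.sum_add_distrib]
          map_smul' := fun r x => by simp [Finset.mul_sum, mul_assoc] }
      have hker : Submodule.span ℝ (Set.range fun a : A => D a.1) ≤ LinearMap.ker L := by
        rw [Submodule.span_le]
        rintro x ⟨a, rfl⟩
        exact LinearMap.mem_ker.mpr (hc a.1 a.2)
      have hDe : D e ∈ LinearMap.ker L := hker (hspan ▸ Submodule.mem_top)
      exact LinearMap.mem_ker.mp hDe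
    have hpsi : ∀ (gr : V → ℝ) (e : E),
        ∑ i, D e i * (gr (snd (t i)) - gr (fst (t i))) = gr (snd e) - gr (fst e) := by
      intro gr e
      set c : Fin n → ℝ := fun i => gr (snd (t i)) - gr (fst (t i)) with hc
      set h : V → ℝ := fun v => (∑ i, φ v i * c i) - gr v with hh
      have hconst : ∀ f ∈ T0, h (fst f) = h (snd f) := by
        intro f hf
        obtain ⟨k, rfl⟩ := hTt f hf
        have h1 : ∀ i, φ (snd (t k)) i = φ (fst (t k)) i + D (t k) i :=
          fun i => congrFun (hφ (t k)) i
        simp only [hh]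
        have h2 : ∑ i, φ (snd (t k)) i * c i = (∑ i, φ (fst (t k)) i * c i) + c k := by
          simp_rw [h1, add_mul, Finset.sum_add_distrib]
          congr 1
          simp [hbasis k, Pi.single_apply, ite_mul]
        rw [h2]
        simp only [hc]
        ring
      have hcc := Aux.const_of_rel h hconst (hT0.1 (fst e) (snd e))
      have h3 : ∀ i, D e i = φ (snd e) i - φ (fst e) i :=
        fun i => by rw [congrFun (hφ e) i]; simp only [Pi.add_apply]; ring
      simp_rw [h3, sub_mul, Finset.sum_sub_distrib]
      simp only [hh] at hcc
      linarith
    have hconnA : ConnVia fst snd A NoRel := by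
      by_contra hnc
      unfold ConnVia at hnc
      push_neg at hnc
      obtain ⟨u, v, huv⟩ := hnc
      set gr : V → ℝ := fun x =>
        if Relation.ReflTransGen (Step fst snd A NoRel) v x then 1 else 0 with hgr
      have key : ∀ {x y : V}, Relation.ReflTransGen (Step fst snd A NoRel) x y →
          gr x = gr y := by
        intro x y hxy
        simp only [hgr]
        by_cases h1 : Relation.ReflTransGen (Step fst snd A NoRel) v x
        · rw [if_pos h1, if_pos (h1.trans hxy)]
        · rw [if_neg h1, if_neg (fun h2 => h1 (h2.trans (Aux.rel_symm hxy)))]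
      have h0 : ∀ e : E, gr (snd e) - gr (fst e) = 0 := by
        intro e
        rw [← hpsi gr e]
        refine hvanish _ (fun f hf => ?_) e
        rw [hpsi gr f]
        rw [key (Aux.rel_of_mem hf)]
        ring
      have hconstgr : gr u = gr v :=
        Aux.const_of_rel gr (fun f _ => by have := h0 f; linarith) (hconn u v)
      have hv1 : gr v = 1 := by simp only [hgr]; rw [if_pos Relation.ReflTransGen.refl]
      have hu0 : gr u = 0 := by
        simp only [hgr]
        rw [if_neg (fun h => huv (Aux.rel_symm h))]
      rw [hv1, hu0] at hconstgr
      norm_num at hconstgr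
    have hmin : ∀ e ∈ A, ¬ ConnVia fst snd (A.erase e) NoRel := by
      intro e he hce
      obtain ⟨w, hw⟩ := Aux.exists_walk (hce (fst e) (snd e))
      have hz := hD.1 (fst e) (Walk.fwd e (Aux.wrev w))
      rw [show wsum D (Walk.fwd e (Aux.wrev w)) = D e + wsum D (Aux.wrev w) from rfl,
        Aux.wsum_rev] at hz
      have hDe : D e = wsum D w := by linear_combination hz
      have hmem : D e ∈ Submodule.span ℝ (D '' ↑(A.erase e)) := by
        have := Aux.wsum_mem_span (D := D) w hw
        rwa [← hDe] at this
      have himg : (fun a : A => D a.1) '' {a : A | a.1 ∈ A.erase e} = D '' ↑(A.erase e) := by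
        ext x
        simp only [Set.mem_image, Set.mem_setOf_eq, Finset.mem_coe]
        constructor
        · rintro ⟨⟨f, hf⟩, hfe, rfl⟩; exact ⟨f, hfe, rfl⟩
        · rintro ⟨f, hf, rfl⟩; exact ⟨⟨f, Finset.mem_of_mem_erase hf⟩, hf, rfl⟩
      have hnot := hli.notMem_span_image (s := {a : A | a.1 ∈ A.erase e})
        (x := ⟨e, he⟩) (by simp)
      rw [himg] at hnot
      exact hnot hmem
    have hAtree : IsSTree fst snd NoRel A := ⟨hconnA, hmin⟩
    refine ⟨hAtree, ?_⟩
    intro en hen hmemA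
    have hsurjA : ∀ f ∈ A, ∃ j, en j = f := by
      intro f hf
      have hbij : Function.Bijective (fun j : Fin n => (⟨en j, hmemA j⟩ : A)) := by
        rw [Fintype.bijective_iff_injective_and_card]
        exact ⟨fun a b h => hen (congrArg Subtype.val h), by rw [hcardA, Fintype.card_fin]⟩
      obtain ⟨j, hj⟩ := hbij.2 ⟨f, hf⟩
      exact ⟨j, congrArg Subtype.val hj⟩
    set Mz : Matrix (Fin n) (Fin n) ℤ :=
      Matrix.of fun i j => Aux.cdiff fst snd T0 t i (en j) with hMz
    set Bz : Matrix (Fin n) (Fin n) ℤ :=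
      Matrix.of fun j i => Aux.cdiff fst snd A en j (t i) with hBz
    have hexp0 : ∀ e, D e = ∑ i, ((Aux.cdiff fst snd T0 t i e : ℤ) : ℝ) • D (t i) :=
      fun e => Aux.expansion hT0 ht htT hTt hφ e
    have hexpA : ∀ e, D e = ∑ j, ((Aux.cdiff fst snd A en j e : ℤ) : ℝ) • D (en j) :=
      fun e => Aux.expansion hAtree hen hmemA hsurjA hφ e
    have hMentry : ∀ i j, D (en j) i = ((Mz i j : ℤ) : ℝ) := by
      intro i j
      rw [congrFun (hexp0 (en j)) i, Finset.sum_apply]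
      simp only [Pi.smul_apply, smul_eq_mul, hbasis, Pi.single_apply, mul_ite, mul_one,
        mul_zero]
      rw [Finset.sum_ite_eq Finset.univ i (fun k => ((Aux.cdiff fst snd T0 t k (en j) : ℤ) : ℝ))]
      simp [hMz]
    have hMB : Mz * Bz = 1 := by
      ext k i
      have h1 := congrFun (hexpA (t i)) k
      rw [hbasis i, Finset.sum_apply] at h1
      simp only [Pi.smul_apply, smul_eq_mul] at h1
      have h2 : ((Pi.single i 1 : Fin n → ℝ) k) = (((Mz * Bz) k i : ℤ) : ℝ) := by
        rw [h1, Matrix.mul_apply]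
        push_cast
        refine Finset.sum_congr rfl fun j _ => ?_
        rw [← hMentry k j]
        simp only [hBz, Matrix.of_apply]
        ring
      apply Int.cast_injective (α := ℝ)
      rw [← h2]
      simp [Pi.single_apply, Matrix.one_apply]
    have hMcast : (Matrix.of fun i j : Fin n => D (en j) i) = Mz.map (Int.cast : ℤ → ℝ) := by
      ext i j
      rw [Matrix.map_apply, Matrix.of_apply]
      exact hMentry i j
    have hdet : Mz.det * Bz.det = 1 := by
      rw [← Matrix.det_mul, hMB, Matrix.det_one]
    have hunit := Int.isUnit_iff.mp (IsUnit.of_mul_eq_one _ hdet)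
    rw [hMcast]
    have hcd : (Mz.map (Int.cast : ℤ → ℝ)).det = ((Mz.det : ℤ) : ℝ) :=
      ((Int.castRingHom ℝ).map_det Mz).symm
    rw [hcd]
    rcases hunit with h | h <;> rw [h] <;> norm_num
  · intro hAtree
    have hinst : ∀ (i1 i2 : DecidableEq E), @IsSTree V E i1 fst snd NoRel A →
        @IsSTree V E i2 fst snd NoRel A := by
      intro i1 i2 h
      have : i2 = i1 := funext fun a => funext fun b => Subsingleton.elim _ _
      rwa [this]
    have hspan := hD.2 A (hinst _ _ hAtree)
    exact linearIndependent_of_top_le_span_of_card_eq_finrank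
      (by rw [hspan]) (by rw [hcardA, hfin])
end

section
/- Let G = (V, E) be a connected graph with n+1 vertices, edge capacities c : E → ℝ_{≥0}, and let D be a spanning representation mapping some spanning tree to the standard basis of ℝ^n. Then the volume of the zonotope Z = { Σ_{e ∈ E} λ_e c(e) D(e) : λ_e ∈ [0,1] } equals Γ(c) = Σ_{T spanning tree of G} Π_{e ∈ T} c(e), the weighted spanning tree polynomial of G evaluated at the capacities. -/
open MeasureTheory

namespace CreditNet

variable {V E : Type} {fst snd : E → V}

/-! ### Walk API -/

def Walk.append : {x y z : V} → Walk fst snd x y → Walk fst snd y z → Walk fst snd x z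
  | _, _, _, .nil _, w2 => w2
  | _, _, _, .fwd e w, w2 => .fwd e (w.append w2)
  | _, _, _, .bwd e w, w2 => .bwd e (w.append w2)

def Walk.reverse : {x y : V} → Walk fst snd x y → Walk fst snd y x
  | _, _, .nil v => .nil v
  | _, _, .fwd e w => w.reverse.append (.bwd e (.nil _))
  | _, _, .bwd e w => w.reverse.append (.fwd e (.nil _))

def Walk.EdgesIn (S : Finset E) : {x y : V} → Walk fst snd x y → Prop
  | _, _, .nil _ => True
  | _, _, .fwd e w => e ∈ S ∧ w.EdgesIn S
  | _, _, .bwd e w => e ∈ S ∧ w.EdgesIn S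

variable {n : ℕ} {D : E → Fin n → ℝ}

lemma wsum_append : ∀ {x y z : V} (w1 : Walk fst snd x y) (w2 : Walk fst snd y z),
    wsum D (w1.append w2) = wsum D w1 + wsum D w2
  | _, _, _, .nil _, w2 => by simp [Walk.append, wsum]
  | _, _, _, .fwd e w, w2 => by
      simp [Walk.append, wsum, wsum_append w w2, add_assoc]
  | _, _, _, .bwd e w, w2 => by
      simp [Walk.append, wsum, wsum_append w w2, add_assoc]

lemma wsum_reverse : ∀ {x y : V} (w : Walk fst snd x y),
    wsum D w.reverse = - wsum D w
  | _, _, .nil _ => by simp [Walk.reverse, wsum]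
  | _, _, .fwd e w => by
      simp [Walk.reverse, wsum, wsum_append, wsum_reverse w]; try abel
  | _, _, .bwd e w => by
      simp [Walk.reverse, wsum, wsum_append, wsum_reverse w]; try abel

lemma Walk.EdgesIn.append {S : Finset E} : ∀ {x y z : V} {w1 : Walk fst snd x y} {w2 : Walk fst snd y z},
    w1.EdgesIn S → w2.EdgesIn S → (w1.append w2).EdgesIn S
  | _, _, _, .nil _, w2, _, h2 => h2
  | _, _, _, .fwd e w, w2, h1, h2 => ⟨h1.1, EdgesIn.append h1.2 h2⟩
  | _, _, _, .bwd e w, w2, h1, h2 => ⟨h1.1, EdgesIn.append h1.2 h2⟩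

lemma Walk.EdgesIn.mono {S S' : Finset E} (hSS : S ⊆ S') : ∀ {x y : V} {w : Walk fst snd x y},
    w.EdgesIn S → w.EdgesIn S'
  | _, _, .nil _, _ => trivial
  | _, _, .fwd e w, h => ⟨hSS h.1, EdgesIn.mono hSS h.2⟩
  | _, _, .bwd e w, h => ⟨hSS h.1, EdgesIn.mono hSS h.2⟩

/-- From reflexive–transitive connectivity we extract a walk with edges in `S`. -/
lemma exists_walk {S : Finset E} {u v : V}
    (h : Relation.ReflTransGen (Step fst snd S NoRel) u v) :
    ∃ w : Walk fst snd u v, w.EdgesIn S := by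
  induction h with
  | refl => exact ⟨.nil u, trivial⟩
  | tail _ hstep ih =>
    obtain ⟨w, hw⟩ := ih
    rcases hstep with ⟨e, he, ⟨h1, h2⟩ | ⟨h1, h2⟩⟩ | h | h
    · subst h1; subst h2
      exact ⟨w.append (.fwd e (.nil _)), hw.append ⟨he, trivial⟩⟩
    · subst h1; subst h2
      exact ⟨w.append (.bwd e (.nil _)), hw.append ⟨he, trivial⟩⟩
    · exact absurd h id
    · exact absurd h id

lemma wsum_eq_wsum (hD1 : ∀ (x : V) (w : Walk fst snd x x), wsum D w = 0)
    {x y : V} (w1 w2 : Walk fst snd x y) : wsum D w1 = wsum D w2 := by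
  have h := hD1 x (w1.append w2.reverse)
  rw [wsum_append, wsum_reverse] at h
  have := add_neg_eq_zero.mp h
  exact this

lemma D_eq_wsum (hD1 : ∀ (x : V) (w : Walk fst snd x x), wsum D w = 0)
    (f : E) (w : Walk fst snd (fst f) (snd f)) : D f = wsum D w := by
  have h := wsum_eq_wsum hD1 (.fwd f (.nil (snd f))) w
  simpa [wsum] using h

lemma wsum_mem_span {S : Finset E} : ∀ {x y : V} {w : Walk fst snd x y}, w.EdgesIn S →
    wsum D w ∈ Submodule.span ℝ (D '' ↑S)
  | _, _, .nil _, _ => by simp [wsum]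
  | _, _, .fwd e w, h => by
      exact add_mem (Submodule.subset_span ⟨e, h.1, rfl⟩) (wsum_mem_span h.2)
  | _, _, .bwd e w, h => by
      exact add_mem (neg_mem (Submodule.subset_span ⟨e, h.1, rfl⟩)) (wsum_mem_span h.2)

lemma wsum_int_comb [Fintype E] [DecidableEq E] {S : Finset E} :
    ∀ {x y : V} {w : Walk fst snd x y}, w.EdgesIn S →
    ∃ z : E → ℤ, wsum D w = ∑ e ∈ S, (z e : ℝ) • D e := by
  intro x y w
  induction w with
  | nil v => exact fun _ => ⟨0, by simp [wsum]⟩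
  | fwd e w ih =>
    rintro ⟨he, hw⟩
    obtain ⟨z, hz⟩ := ih hw
    refine ⟨fun e' => if e' = e then z e' + 1 else z e', ?_⟩
    have : ∀ e' ∈ S, ((if e' = e then z e' + 1 else z e' : ℤ) : ℝ) • D e'
        = (z e' : ℝ) • D e' + (if e' = e then (1:ℝ) else 0) • D e' := by
      intro e' _; split <;> simp [add_smul]
    rw [wsum, hz, Finset.sum_congr rfl this, Finset.sum_add_distrib]
    have : ∑ e' ∈ S, (if e' = e then (1:ℝ) else 0) • D e' = D e := by
      rw [Finset.sum_eq_single e] <;> simp_all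
    rw [this]; abel
  | bwd e w ih =>
    rintro ⟨he, hw⟩
    obtain ⟨z, hz⟩ := ih hw
    refine ⟨fun e' => if e' = e then z e' - 1 else z e', ?_⟩
    have : ∀ e' ∈ S, ((if e' = e then z e' - 1 else z e' : ℤ) : ℝ) • D e'
        = (z e' : ℝ) • D e' + (if e' = e then (-1:ℝ) else 0) • D e' := by
      intro e' _; split <;> simp [sub_smul, add_smul, sub_eq_add_neg, neg_smul]
    rw [wsum, hz, Finset.sum_congr rfl this, Finset.sum_add_distrib]
    have : ∑ e' ∈ S, (if e' = e then (-1:ℝ) else 0) • D e' = -D e := by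
      rw [Finset.sum_eq_single e] <;> simp_all
    rw [this]; abel

lemma wsum_intEntries {S : Finset E} (hS : ∀ e ∈ S, ∀ i, ∃ z : ℤ, D e i = z) :
    ∀ {x y : V} {w : Walk fst snd x y}, w.EdgesIn S → ∀ i, ∃ z : ℤ, wsum D w i = z := by
  intro x y w
  induction w with
  | nil v => intro _ i; exact ⟨0, by simp [wsum]⟩
  | fwd e w ih =>
    rintro ⟨he, hw⟩ i
    obtain ⟨z1, hz1⟩ := hS e he i
    obtain ⟨z2, hz2⟩ := ih hw i
    exact ⟨z1 + z2, by simp [wsum, hz1, hz2]⟩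
  | bwd e w ih =>
    rintro ⟨he, hw⟩ i
    obtain ⟨z1, hz1⟩ := hS e he i
    obtain ⟨z2, hz2⟩ := ih hw i
    exact ⟨-z1 + z2, by simp [wsum, hz1, hz2]⟩

/-- Telescoping a linear functional along a walk. -/
lemma map_wsum_telescope {S : Finset E} (L : (Fin n → ℝ) →ₗ[ℝ] ℝ) (φ : V → ℝ)
    (h : ∀ e ∈ S, L (D e) = φ (snd e) - φ (fst e)) :
    ∀ {x y : V} {w : Walk fst snd x y}, w.EdgesIn S → L (wsum D w) = φ y - φ x := by
  intro x y w
  induction w with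
  | nil v => intro _; simp [wsum]
  | fwd e w ih =>
    rintro ⟨he, hw⟩
    rw [wsum, map_add, h e he, ih hw]; ring
  | bwd e w ih =>
    rintro ⟨he, hw⟩
    rw [wsum, map_add, map_neg, h e he, ih hw]; ring

/-- A `Step`-relation is symmetric. -/
lemma step_symm {S : Finset E} {u v : V} (h : Step fst snd S NoRel u v) :
    Step fst snd S NoRel v u := by
  rcases h with ⟨e, he, h⟩ | h | h
  · exact Or.inl ⟨e, he, h.symm⟩
  · exact Or.inr (Or.inr h)
  · exact Or.inr (Or.inl h)

lemma rtg_symm {S : Finset E} {u v : V}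
    (h : Relation.ReflTransGen (Step fst snd S NoRel) u v) :
    Relation.ReflTransGen (Step fst snd S NoRel) v u := by
  induction h with
  | refl => exact .refl
  | tail _ hstep ih => exact Relation.ReflTransGen.trans (.single (step_symm hstep)) ih

end CreditNet

namespace CreditNet

variable {V E : Type} {fst snd : E → V} {n : ℕ} {D : E → Fin n → ℝ}

open Classical in
lemma exists_cut_functional {T0 : Finset E} {t : Fin n → E}
    (hD1 : ∀ (x : V) (w : Walk fst snd x x), wsum D w = 0)
    (hT0conn : ConnVia fst snd T0 NoRel)
    (hTt : ∀ e ∈ T0, ∃ i, t i = e) (hbasis : ∀ i, D (t i) = Pi.single i 1)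
    (S' : Finset E) (u : V) :
    ∃ (L : (Fin n → ℝ) →ₗ[ℝ] ℝ) (φ : V → ℝ),
      (∀ f, L (D f) = φ (snd f) - φ (fst f)) ∧ φ u = 1 ∧
      (∀ v, ¬ Relation.ReflTransGen (Step fst snd S' NoRel) u v → φ v = 0) ∧
      (∀ f ∈ S', L (D f) = 0) := by
  set φ : V → ℝ := fun v => if Relation.ReflTransGen (Step fst snd S' NoRel) u v then 1 else 0
    with hφdef
  set L : (Fin n → ℝ) →ₗ[ℝ] ℝ :=
    ∑ i : Fin n, (φ (snd (t i)) - φ (fst (t i))) • LinearMap.proj i with hLdef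
  have hLapp : ∀ x : Fin n → ℝ, L x = ∑ i, (φ (snd (t i)) - φ (fst (t i))) * x i := by
    intro x
    rw [hLdef, LinearMap.sum_apply]
    exact Finset.sum_congr rfl fun i _ => rfl
  have hLT0 : ∀ e ∈ T0, L (D e) = φ (snd e) - φ (fst e) := by
    intro e he
    obtain ⟨i, rfl⟩ := hTt e he
    rw [hbasis i, hLapp, Finset.sum_eq_single i]
    · rw [Pi.single_eq_same]; ring
    · intro j _ hj
      rw [Pi.single_eq_of_ne hj, mul_zero]
    · intro h; exact absurd (Finset.mem_univ i) h
  have hLall : ∀ f, L (D f) = φ (snd f) - φ (fst f) := by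
    intro f
    obtain ⟨w, hw⟩ := exists_walk (hT0conn (fst f) (snd f))
    rw [D_eq_wsum hD1 f w]
    exact map_wsum_telescope L φ hLT0 hw
  refine ⟨L, φ, hLall, if_pos Relation.ReflTransGen.refl, fun v hv => if_neg hv, ?_⟩
  intro f hf
  have hiff : Relation.ReflTransGen (Step fst snd S' NoRel) u (fst f) ↔
      Relation.ReflTransGen (Step fst snd S' NoRel) u (snd f) := by
    constructor
    · intro h; exact h.tail (Or.inl ⟨f, hf, Or.inl ⟨rfl, rfl⟩⟩)
    · intro h; exact h.tail (step_symm (Or.inl ⟨f, hf, Or.inl ⟨rfl, rfl⟩⟩))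
  rw [hLall f, hφdef]
  simp only []
  rw [if_congr hiff.symm rfl rfl]
  ring

lemma conn_erase {S : Finset E} {e : E} [DecidableEq E] (hS : ConnVia fst snd S NoRel)
    (hee : Relation.ReflTransGen (Step fst snd (S.erase e) NoRel) (fst e) (snd e)) :
    ConnVia fst snd (S.erase e) NoRel := by
  intro u v
  induction hS u v with
  | refl => exact .refl
  | @tail b c _ hstep ih =>
    rcases hstep with ⟨e', he', horient⟩ | h | h
    · by_cases he'e : e' = e
      · subst he'e
        rcases horient with ⟨h1, h2⟩ | ⟨h1, h2⟩
        · subst h1; subst h2; exact ih.trans hee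
        · subst h1; subst h2; exact ih.trans (rtg_symm hee)
      · exact ih.tail (Or.inl ⟨e', Finset.mem_erase.mpr ⟨he'e, he'⟩, horient⟩)
    · exact absurd h id
    · exact absurd h id

lemma image_diff_eq {S : Finset E} [DecidableEq E] (i : ↥S) :
    (fun e : ↥S => D e.1) '' (Set.univ \ {i}) = D '' ↑(S.erase i.1) := by
  ext x
  simp only [Set.mem_image, Set.mem_diff, Set.mem_univ, Set.mem_singleton_iff, true_and,
    Finset.coe_erase, Set.mem_diff, Finset.mem_coe]
  constructor
  · rintro ⟨j, hj, rfl⟩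
    exact ⟨j.1, ⟨j.2, fun h => hj (Subtype.ext h)⟩, rfl⟩
  · rintro ⟨e, ⟨heS, hee⟩, rfl⟩
    exact ⟨⟨e, heS⟩, fun h => hee (congrArg Subtype.val h), rfl⟩

variable [Fintype E] [DecidableEq E]

/-- Main equivalence: spanning trees are exactly the `n`-element sets whose
`D`-images span. -/
lemma istree_iff {T0 : Finset E} {t : Fin n → E}
    (hconn : ConnVia fst snd Finset.univ NoRel)
    (hD1 : ∀ (x : V) (w : Walk fst snd x x), wsum D w = 0)
    (hD2 : ∀ T : Finset E, IsSTree fst snd NoRel T →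
      Submodule.span ℝ (Set.range fun e : T => D e.1) = (⊤ : Submodule ℝ (Fin n → ℝ)))
    (hT0conn : ConnVia fst snd T0 NoRel)
    (hTt : ∀ e ∈ T0, ∃ i, t i = e) (hbasis : ∀ i, D (t i) = Pi.single i 1)
    (S : Finset E) :
    IsSTree fst snd NoRel S ↔
      (S.card = n ∧ Submodule.span ℝ (D '' ↑S) = ⊤) := by
  have hrange : (Set.range fun e : ↥S => D e.1) = D '' ↑S := by
    rw [Set.image_eq_range]; rfl
  constructor
  · intro hS
    have hspan : Submodule.span ℝ (D '' ↑S) = ⊤ := by rw [← hrange]; exact hD2 S hS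
    have hLI : LinearIndependent ℝ (fun e : ↥S => D e.1) := by
      by_contra hLI
      rw [linearIndependent_iff_notMem_span] at hLI
      push_neg at hLI
      obtain ⟨i, hi⟩ := hLI
      rw [image_diff_eq i] at hi
      -- the erased set still connects the endpoints of `i`
      have hee : Relation.ReflTransGen (Step fst snd (S.erase i.1) NoRel)
          (fst i.1) (snd i.1) := by
        by_contra hnc
        obtain ⟨L, φ, hL, hφu, hφ0, hLS'⟩ :=
          exists_cut_functional hD1 hT0conn hTt hbasis (S.erase i.1) (fst i.1)
        have hker : Submodule.span ℝ (D '' ↑(S.erase i.1)) ≤ LinearMap.ker L := by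
          rw [Submodule.span_le]
          rintro x ⟨f, hf, rfl⟩
          exact LinearMap.mem_ker.mpr (hLS' f hf)
        have h0 : L (D i.1) = 0 := hker hi
        rw [hL i.1, hφu, hφ0 _ hnc] at h0
        norm_num at h0
      exact hS.2 i.1 i.2 (conn_erase hS.1 hee)
    have hb : Module.Basis ↥S ℝ (Fin n → ℝ) := Module.Basis.mk hLI (by rw [hrange, hspan])
    have hcard : S.card = n := by
      have h1 := Module.finrank_eq_card_basis hb
      simp [Module.finrank_pi, Fintype.card_coe] at h1
      omega
    exact ⟨hcard, hspan⟩
  · rintro ⟨hcard, hspan⟩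
    have hle : ⊤ ≤ Submodule.span ℝ (Set.range fun e : ↥S => D e.1) := by
      rw [hrange, hspan]
    have hcard' : Fintype.card ↥S = Module.finrank ℝ (Fin n → ℝ) := by
      simp [Module.finrank_pi, Fintype.card_coe, hcard]
    have hLI : LinearIndependent ℝ (fun e : ↥S => D e.1) := by
      have h := (basisOfTopLeSpanOfCardEqFinrank (fun e : ↥S => D e.1) hle
        hcard').linearIndependent
      rwa [coe_basisOfTopLeSpanOfCardEqFinrank] at h
    constructor
    · -- connectivity
      intro u v
      by_contra hnc
      obtain ⟨L, φ, hL, hφu, hφ0, hLS'⟩ :=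
        exists_cut_functional hD1 hT0conn hTt hbasis S u
      have hker : Submodule.span ℝ (D '' ↑S) ≤ LinearMap.ker L := by
        rw [Submodule.span_le]
        rintro x ⟨f, hf, rfl⟩
        exact LinearMap.mem_ker.mpr (hLS' f hf)
      rw [hspan, top_le_iff] at hker
      have hL0 : ∀ f, φ (snd f) = φ (fst f) := by
        intro f
        have := hL f
        rw [LinearMap.ker_eq_top.mp hker.symm.symm] at this
        · simp at this; linarith [this]
      -- φ is constant along the connected graph
      have hconst : ∀ a b : V, Relation.ReflTransGen (Step fst snd Finset.univ NoRel) a b →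
          φ a = φ b := by
        intro a b hab
        induction hab with
        | refl => rfl
        | tail _ hstep ih =>
          rcases hstep with ⟨e', _, ⟨h1, h2⟩ | ⟨h1, h2⟩⟩ | h | h
          · subst h1; subst h2; rw [ih, ← hL0 e']
          · subst h1; subst h2; rw [ih, hL0 e']
          · exact absurd h id
          · exact absurd h id
      have := hconst u v (hconn u v)
      rw [hφu, hφ0 v hnc] at this
      norm_num at this
    · -- minimality
      intro e he hconn'
      obtain ⟨w, hw⟩ := exists_walk (hconn' (fst e) (snd e))
      have hmem : D e ∈ Submodule.span ℝ (D '' ↑(S.erase e)) := by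
        rw [D_eq_wsum hD1 e w]
        exact wsum_mem_span hw
      rw [linearIndependent_iff_notMem_span] at hLI
      exact hLI ⟨e, he⟩ (by rw [image_diff_eq ⟨e, he⟩]; exact hmem)

end CreditNet

namespace CreditNet

/-! ### Column matrices and absolute determinants of subfamilies -/

def colMat {ι : Type} {n : ℕ} (g : ι → Fin n → ℝ) (σ : Fin n → ι) : Matrix (Fin n) (Fin n) ℝ :=
  Matrix.of fun i j => g (σ j) i

/-- Canonical enumeration of a finset of the right cardinality. -/
noncomputable def senum {ι : Type} {n : ℕ} (S : Finset ι) (h : S.card = n) : Fin n ≃ ↥S :=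
  (finCongr h.symm).trans S.equivFin.symm

/-- The absolute determinant of the subfamily indexed by `S` (0 if the size is wrong). -/
noncomputable def adet {ι : Type} {n : ℕ} (g : ι → Fin n → ℝ) (S : Finset ι) : ℝ :=
  if h : S.card = n then |(colMat g (fun j => (senum S h j).1)).det| else 0

lemma adet_nonneg {ι : Type} {n : ℕ} (g : ι → Fin n → ℝ) (S : Finset ι) : 0 ≤ adet g S := by
  unfold adet; split
  · exact abs_nonneg _
  · exact le_refl 0

lemma abs_det_perm {n : ℕ} (M : Matrix (Fin n) (Fin n) ℝ) (τ : Equiv.Perm (Fin n)) :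
    |(M.submatrix id τ).det| = |M.det| := by
  rw [Matrix.det_permute' τ M, abs_mul]
  rcases Int.units_eq_one_or (Equiv.Perm.sign τ) with h | h <;> simp [h]

/-- `adet` can be computed with any enumeration of `S`. -/
lemma adet_eq {ι : Type} {n : ℕ} (g : ι → Fin n → ℝ) (S : Finset ι) (h : S.card = n)
    (σ : Fin n ≃ ↥S) : adet g S = |(colMat g (fun j => (σ j).1)).det| := by
  rw [adet, dif_pos h]
  set τ : Equiv.Perm (Fin n) := σ.trans (senum S h).symm with hτ
  have hcomp : ∀ j, (σ j).1 = (senum S h (τ j)).1 := by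
    intro j; simp [hτ]
  have : colMat g (fun j => (σ j).1)
      = (colMat g (fun j => (senum S h j).1)).submatrix id τ := by
    ext i j; simp [colMat, hcomp j, Matrix.submatrix_apply]
  rw [this, abs_det_perm]

lemma adet_smul {ι : Type} {n : ℕ} (c : ι → ℝ) (hc : ∀ i, 0 ≤ c i) (g : ι → Fin n → ℝ)
    (S : Finset ι) : adet (fun i => c i • g i) S = (∏ e ∈ S, c e) * adet g S := by
  by_cases h : S.card = n
  · rw [adet, dif_pos h, adet, dif_pos h]
    have : colMat (fun i => c i • g i) (fun j => (senum S h j).1)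
        = Matrix.of fun i j => c ((senum S h j).1) * (colMat g (fun j => (senum S h j).1)) i j := by
      ext i j; simp [colMat, Matrix.of_apply]
    rw [this, Matrix.det_mul_row, abs_mul]
    have hprod : ∏ j : Fin n, c ((senum S h j).1) = ∏ e ∈ S, c e := by
      rw [← Finset.prod_coe_sort S c]
      exact Equiv.prod_comp (senum S h) (fun x => c x.1)
    rw [hprod, abs_of_nonneg (Finset.prod_nonneg fun e _ => hc e)]
  · rw [adet, dif_neg h, adet, dif_neg h, mul_zero]

variable {V E : Type} {fst snd : E → V} {n : ℕ} {D : E → Fin n → ℝ} [Fintype E] [DecidableEq E]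

/-- If the columns of `S` do not span, the absolute determinant vanishes. -/
lemma adet_eq_zero_of_not_span (S : Finset E) (hcard : S.card = n)
    (hnspan : Submodule.span ℝ (D '' ↑S) ≠ ⊤) : adet D S = 0 := by
  rw [adet, dif_pos hcard, abs_eq_zero]
  by_contra hdet
  apply hnspan
  set M := colMat D (fun j => (senum S hcard j).1) with hM
  have hunit : IsUnit M.det := isUnit_iff_ne_zero.mpr hdet
  have hsurj : Function.Surjective M.mulVecLin := by
    intro x
    refine ⟨M⁻¹.mulVec x, ?_⟩
    simp only [Matrix.mulVecLin_apply, Matrix.mulVec_mulVec, Matrix.mul_nonsing_inv M hunit,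
      Matrix.one_mulVec]
  have hrange : LinearMap.range M.mulVecLin = ⊤ := LinearMap.range_eq_top.mpr hsurj
  rw [Matrix.range_mulVecLin] at hrange
  have hcols : Set.range M.transpose = D '' ↑S := by
    ext x
    constructor
    · rintro ⟨j, rfl⟩
      exact ⟨(senum S hcard j).1, (senum S hcard j).2, rfl⟩
    · rintro ⟨e, he, rfl⟩
      exact ⟨(senum S hcard).symm ⟨e, he⟩, by
        funext i
        simp [Matrix.transpose_apply, hM, colMat]⟩
  have hcol : Set.range M.col = Set.range M.transpose := rfl
  rw [hcol, hcols] at hrange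
  exact hrange

/-- Unimodularity: the columns of a spanning tree have absolute determinant 1. -/
lemma adet_tree_eq_one {T0 : Finset E} {t : Fin n → E}
    (hD1 : ∀ (x : V) (w : Walk fst snd x x), wsum D w = 0)
    (hT0conn : ConnVia fst snd T0 NoRel)
    (hTt : ∀ e ∈ T0, ∃ i, t i = e) (hbasis : ∀ i, D (t i) = Pi.single i 1)
    (S : Finset E) (hcard : S.card = n) (hSconn : ConnVia fst snd S NoRel) :
    adet D S = 1 := by
  classical
  set enum : Fin n ≃ ↥S := senum S hcard with henum
  set M : Matrix (Fin n) (Fin n) ℝ := colMat D (fun j => (enum j).1) with hM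
  -- integer entries of M
  have hT0int : ∀ e ∈ T0, ∀ i, ∃ z : ℤ, D e i = z := by
    intro e he i
    obtain ⟨i', rfl⟩ := hTt e he
    rw [hbasis i']
    by_cases h : i = i'
    · subst h; exact ⟨1, by rw [Pi.single_eq_same]; norm_num⟩
    · exact ⟨0, by rw [Pi.single_eq_of_ne h]; norm_num⟩
  have hDint : ∀ e, ∀ i, ∃ z : ℤ, D e i = z := by
    intro e i
    obtain ⟨w, hw⟩ := exists_walk (hT0conn (fst e) (snd e))
    rw [D_eq_wsum hD1 e w]
    exact wsum_intEntries hT0int hw i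
  choose Mz0 hMz using fun i j => hDint ((enum j).1) i
  set Mz : Matrix (Fin n) (Fin n) ℤ := Matrix.of Mz0 with hMzdef
  -- integer coordinates of the standard basis in the tree columns
  have hcoord : ∀ i' : Fin n, ∃ z : E → ℤ,
      (Pi.single i' 1 : Fin n → ℝ) = ∑ e ∈ S, (z e : ℝ) • D e := by
    intro i'
    obtain ⟨w, hw⟩ := exists_walk (hSconn (fst (t i')) (snd (t i')))
    obtain ⟨z, hz⟩ := wsum_int_comb hw
    exact ⟨z, by rw [← hbasis i', D_eq_wsum hD1 (t i') w, hz]⟩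
  choose zfun hzfun using hcoord
  set Nz : Matrix (Fin n) (Fin n) ℤ := Matrix.of fun j i' => zfun i' ((enum j).1) with hNz
  have hMN : (Mz.map (Int.cast : ℤ → ℝ)) * (Nz.map (Int.cast : ℤ → ℝ)) = 1 := by
    ext i i'
    rw [Matrix.mul_apply, Matrix.one_apply]
    have h1 : (Pi.single i' 1 : Fin n → ℝ) i = ∑ e ∈ S, (zfun i' e : ℝ) * D e i := by
      rw [hzfun i']
      rw [Finset.sum_apply]
      exact Finset.sum_congr rfl fun e _ => rfl
    have h2 : ∑ e ∈ S, (zfun i' e : ℝ) * D e i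
        = ∑ j : Fin n, (zfun i' ((enum j).1) : ℝ) * D ((enum j).1) i := by
      rw [← Finset.sum_coe_sort S (fun e => (zfun i' e : ℝ) * D e i)]
      exact (Equiv.sum_comp enum (fun x : ↥S => (zfun i' x.1 : ℝ) * D x.1 i)).symm
    have h3 : ∑ j : Fin n, (Mz.map (Int.cast : ℤ → ℝ)) i j * (Nz.map (Int.cast : ℤ → ℝ)) j i'
        = ∑ j : Fin n, (zfun i' ((enum j).1) : ℝ) * D ((enum j).1) i := by
      refine Finset.sum_congr rfl fun j _ => ?_
      simp only [Matrix.map_apply, hNz, hMzdef, Matrix.of_apply, ← hMz i j]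
      ring
    rw [h3, ← h2, ← h1, Pi.single_apply]
  have hMeq : M = Mz.map (Int.cast : ℤ → ℝ) := by
    ext i j; rw [Matrix.map_apply, hMzdef, Matrix.of_apply, ← hMz i j]; rfl
  have hmapdet : ∀ A : Matrix (Fin n) (Fin n) ℤ,
      (A.map (Int.cast : ℤ → ℝ)).det = ((A.det : ℤ) : ℝ) := by
    intro A
    rw [show (Int.cast : ℤ → ℝ) = ⇑(Int.castRingHom ℝ) from rfl, ← RingHom.mapMatrix_apply,
      ← RingHom.map_det]
  have hdet : ((Mz.det : ℤ) : ℝ) * ((Nz.det : ℤ) : ℝ) = 1 := by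
    have h := congrArg Matrix.det hMN
    rw [Matrix.det_mul, Matrix.det_one, hmapdet, hmapdet] at h
    exact h
  have hz1 : Mz.det * Nz.det = 1 := by
    exact_mod_cast hdet
  have : Mz.det = 1 ∨ Mz.det = -1 := Int.isUnit_iff.mp (IsUnit.of_mul_eq_one _ hz1)
  have habs : |M.det| = 1 := by
    rw [hMeq, hmapdet]
    rcases this with h | h <;> simp [h]
  rw [adet, dif_pos hcard]
  exact habs

end CreditNet

namespace CreditNet

open MeasureTheory
open scoped ENNReal Pointwise

/-! ### Zonotopes over a finset of generators -/

def zonoA {ι : Type} [Fintype ι] {n : ℕ} (g : ι → Fin n → ℝ) (A : Finset ι) :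
    Set (Fin n → ℝ) :=
  { z | ∃ lam : ι → ℝ, (∀ i, lam i ∈ Set.Icc (0:ℝ) 1) ∧ z = ∑ i ∈ A, lam i • g i }

variable {ι : Type} [Fintype ι] {n : ℕ}

lemma zonoA_eq_image (g : ι → Fin n → ℝ) (A : Finset ι) :
    zonoA g A = (fun lam : ι → ℝ => ∑ i ∈ A, lam i • g i) ''
      (Set.univ.pi fun _ => Set.Icc (0:ℝ) 1) := by
  ext z
  simp only [zonoA, Set.mem_setOf_eq, Set.mem_image, Set.mem_pi, Set.mem_univ, true_implies]
  constructor
  · rintro ⟨lam, h1, rfl⟩; exact ⟨lam, h1, rfl⟩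
  · rintro ⟨lam, h1, rfl⟩; exact ⟨lam, h1, rfl⟩

lemma isCompact_zonoA (g : ι → Fin n → ℝ) (A : Finset ι) : IsCompact (zonoA g A) := by
  rw [zonoA_eq_image]
  exact (isCompact_univ_pi fun _ => isCompact_Icc).image
    (continuous_finset_sum _ fun i _ => (continuous_apply i).smul continuous_const)

lemma convex_zonoA (g : ι → Fin n → ℝ) (A : Finset ι) : Convex ℝ (zonoA g A) := by
  rintro z1 ⟨lam1, h1, rfl⟩ z2 ⟨lam2, h2, rfl⟩ a b ha hb hab
  refine ⟨fun i => a * lam1 i + b * lam2 i, fun i => ?_, ?_⟩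
  · constructor
    · exact add_nonneg (mul_nonneg ha (h1 i).1) (mul_nonneg hb (h2 i).1)
    · calc a * lam1 i + b * lam2 i ≤ a * 1 + b * 1 := by
            gcongr; exacts [(h1 i).2, (h2 i).2]
        _ = 1 := by rw [mul_one, mul_one, hab]
  · rw [Finset.smul_sum, Finset.smul_sum, ← Finset.sum_add_distrib]
    refine Finset.sum_congr rfl fun i _ => ?_
    rw [add_smul, mul_smul, mul_smul]

lemma zonoA_image_linear {m : ℕ} (L : (Fin n → ℝ) →ₗ[ℝ] (Fin m → ℝ)) (g : ι → Fin n → ℝ)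
    (A : Finset ι) : L '' zonoA g A = zonoA (fun i => L (g i)) A := by
  ext z
  constructor
  · rintro ⟨w, ⟨lam, h1, rfl⟩, rfl⟩
    exact ⟨lam, h1, by rw [map_sum]; exact Finset.sum_congr rfl fun i _ => map_smul L _ _⟩
  · rintro ⟨lam, h1, rfl⟩
    refine ⟨∑ i ∈ A, lam i • g i, ⟨lam, h1, rfl⟩, ?_⟩
    rw [map_sum]; exact Finset.sum_congr rfl fun i _ => map_smul L _ _

lemma zonoA_insert [DecidableEq ι] {g : ι → Fin n → ℝ} {A : Finset ι} {a : ι} (ha : a ∉ A) :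
    zonoA g (insert a A) =
      {z | ∃ s ∈ Set.Icc (0:ℝ) 1, ∃ z₀ ∈ zonoA g A, z = z₀ + s • g a} := by
  classical
  ext z
  constructor
  · rintro ⟨lam, h1, rfl⟩
    refine ⟨lam a, h1 a, ∑ i ∈ A, lam i • g i, ⟨lam, h1, rfl⟩, ?_⟩
    rw [Finset.sum_insert ha, add_comm]
  · rintro ⟨s, hs, z₀, ⟨lam, h1, rfl⟩, rfl⟩
    refine ⟨Function.update lam a s, fun i => ?_, ?_⟩
    · rcases eq_or_ne i a with rfl | hne
      · rwa [Function.update_self]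
      · rw [Function.update_of_ne hne]; exact h1 i
    · rw [Finset.sum_insert ha, Function.update_self, add_comm]
      congr 1
      refine Finset.sum_congr rfl fun i hi => ?_
      rw [Function.update_of_ne (ne_of_mem_of_not_mem hi ha)]

/-! ### The key volume identity: adding one segment in the last coordinate -/

/-- Non-dependent `Fin.snoc`. -/
def esnoc {k : ℕ} (y : Fin k → ℝ) (x : ℝ) : Fin (k+1) → ℝ := Fin.snoc y x

@[simp] lemma esnoc_castSucc {k : ℕ} (y : Fin k → ℝ) (x : ℝ) (j : Fin k) :
    esnoc y x (Fin.castSucc j) = y j := by simp [esnoc]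

@[simp] lemma esnoc_last {k : ℕ} (y : Fin k → ℝ) (x : ℝ) :
    esnoc y x (Fin.last k) = x := by simp [esnoc]

lemma snoc_sub_smul {k : ℕ} (y : Fin k → ℝ) (x s : ℝ) :
    esnoc y x - s • (Pi.single (Fin.last k) 1 : Fin (k+1) → ℝ)
      = esnoc y (x - s) := by
  funext j
  refine Fin.lastCases ?_ (fun j => ?_) j
  · simp [esnoc]
  · simp [esnoc, Pi.single_eq_of_ne (Fin.castSucc_lt_last j).ne]

lemma snoc_add_smul {k : ℕ} (y : Fin k → ℝ) (x s : ℝ) :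
    esnoc y x + s • (Pi.single (Fin.last k) 1 : Fin (k+1) → ℝ)
      = esnoc y (x + s) := by
  have := snoc_sub_smul y (x + s) s
  rw [add_sub_cancel_right] at this
  rw [← this]; abel

lemma snoc_affine {k : ℕ} (y : Fin k → ℝ) (x : ℝ) :
    esnoc y x = esnoc y 0 + x • (Pi.single (Fin.last k) 1 : Fin (k+1) → ℝ) := by
  rw [snoc_add_smul, zero_add]

lemma volume_add_segment {k : ℕ} (Z₀ : Set (Fin (k+1) → ℝ)) (hconv : Convex ℝ Z₀)
    (hcomp : IsCompact Z₀) :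
    volume {z | ∃ s ∈ Set.Icc (0:ℝ) 1, ∃ z₀ ∈ Z₀,
        z = z₀ + s • (Pi.single (Fin.last k) 1 : Fin (k+1) → ℝ)}
      = volume Z₀ + volume ((fun z : Fin (k+1) → ℝ => z ∘ Fin.castSucc) '' Z₀) := by
  set u : Fin (k+1) → ℝ := Pi.single (Fin.last k) (1:ℝ) with hu
  set Z : Set (Fin (k+1) → ℝ) :=
    {z | ∃ s ∈ Set.Icc (0:ℝ) 1, ∃ z₀ ∈ Z₀, z = z₀ + s • u} with hZ
  set π : (Fin (k+1) → ℝ) → (Fin k → ℝ) := fun z => z ∘ Fin.castSucc with hπ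
  have hπcont : Continuous π := continuous_pi fun j => continuous_apply _
  -- compactness of Z
  have hZcomp : IsCompact Z := by
    have : Z = (fun p : (Fin (k+1) → ℝ) × ℝ => p.1 + p.2 • u) '' (Z₀ ×ˢ Set.Icc 0 1) := by
      ext z
      simp only [hZ, Set.mem_setOf_eq, Set.mem_image, Set.mem_prod]
      constructor
      · rintro ⟨s, hs, z₀, hz₀, rfl⟩; exact ⟨⟨z₀, s⟩, ⟨hz₀, hs⟩, rfl⟩
      · rintro ⟨⟨z₀, s⟩, ⟨hz₀, hs⟩, rfl⟩; exact ⟨s, hs, z₀, hz₀, rfl⟩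
    rw [this]
    exact (hcomp.prod isCompact_Icc).image
      (continuous_fst.add (continuous_snd.smul continuous_const))
  -- the measurable equivalence peeling off the last coordinate
  set F := MeasurableEquiv.piFinSuccAbove (fun _ : Fin (k+1) => ℝ) (Fin.last k) with hF
  have hFmp : MeasurePreserving F volume volume := volume_preserving_piFinSuccAbove _ _
  have hsymm : ∀ (x : ℝ) (y : Fin k → ℝ), F.symm (x, y) = esnoc y x := by
    intro x y
    show (Fin.insertNthEquiv (fun _ : Fin (k+1) => ℝ) (Fin.last k)) (x, y) = _
    simp [Fin.insertNthEquiv, Fin.insertNth_last, esnoc]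
  have himg : ∀ s : Set (Fin (k+1) → ℝ), F '' s = F.symm ⁻¹' s := fun s =>
    Equiv.image_eq_preimage_symm _ _
  have hvol : ∀ s : Set (Fin (k+1) → ℝ), MeasurableSet s →
      volume s = ∫⁻ y : Fin k → ℝ, volume {x : ℝ | esnoc y x ∈ s} := by
    intro s hs
    have h1 : volume s = volume (F.symm ⁻¹' s) := by
      rw [(MeasurePreserving.symm F hFmp).measure_preimage hs.nullMeasurableSet]
    have h2 : MeasurableSet (F.symm ⁻¹' s) := F.symm.measurable hs
    rw [h1, Measure.volume_eq_prod, Measure.prod_apply_symm h2]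
    refine lintegral_congr fun y => ?_
    congr 1
    ext x
    simp only [Set.mem_preimage, Set.mem_setOf_eq, hsymm x y]
  -- slices of Z₀ and Z
  set S₀ : (Fin k → ℝ) → Set ℝ := fun y => {x | esnoc y x ∈ Z₀} with hS₀
  set SZ : (Fin k → ℝ) → Set ℝ := fun y => {x | esnoc y x ∈ Z} with hSZ
  have hslice : ∀ y, SZ y = S₀ y + Set.Icc (0:ℝ) 1 := by
    intro y
    ext x
    simp only [hSZ, hS₀, Set.mem_setOf_eq, hZ, Set.mem_add]
    constructor
    · rintro ⟨s, hs, z₀, hz₀, hx⟩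
      refine ⟨x - s, ?_, s, hs, by ring⟩
      have : z₀ = esnoc y (x - s) := by
        rw [← snoc_sub_smul]
        rw [hx]; abel
      rwa [← this]
    · rintro ⟨p, hp, s, hs, rfl⟩
      exact ⟨s, hs, esnoc y p, hp, by rw [snoc_add_smul]⟩
  have hS₀conv : ∀ y, Convex ℝ (S₀ y) := by
    intro y x1 h1 x2 h2 a b ha hb hab
    have key : (esnoc y (a * x1 + b * x2) : Fin (k+1) → ℝ)
        = a • esnoc y x1 + b • esnoc y x2 := by
      rw [snoc_affine y x1, snoc_affine y x2, snoc_affine y (a * x1 + b * x2)]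
      rw [smul_add, smul_add, smul_smul, smul_smul]
      rw [← add_assoc]
      have : a • (esnoc y 0 : Fin (k+1) → ℝ) + (a * x1) • u + b • esnoc y 0
          = (a + b) • esnoc y 0 + (a * x1) • u := by
        rw [add_smul]; abel
      rw [this, hab, one_smul, add_assoc, ← add_smul]
    show esnoc y (a * x1 + b * x2) ∈ Z₀
    rw [key]
    exact hconv h1 h2 ha hb hab
  have hS₀comp : ∀ y, IsCompact (S₀ y) := by
    intro y
    have hclosed : IsClosed (S₀ y) := by
      have : Continuous (fun x : ℝ => esnoc y x) := by
        have : (fun x : ℝ => esnoc y x)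
            = fun x => esnoc y 0 + x • u := by
          funext x; exact snoc_affine y x
        rw [this]
        exact continuous_const.add (continuous_id.smul continuous_const)
      exact IsClosed.preimage this hcomp.isClosed
    refine IsCompact.of_isClosed_subset (hcomp.image (continuous_apply (Fin.last k)))
      hclosed ?_
    intro x hx
    exact ⟨esnoc y x, hx, esnoc_last y x⟩
  have hne_iff : ∀ y, (S₀ y).Nonempty ↔ y ∈ π '' Z₀ := by
    intro y
    constructor
    · rintro ⟨x, hx⟩
      refine ⟨esnoc y x, hx, ?_⟩
      funext j; exact esnoc_castSucc y x j
    · rintro ⟨z, hz, rfl⟩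
      refine ⟨z (Fin.last k), ?_⟩
      show esnoc (π z) (z (Fin.last k)) ∈ Z₀
      have : esnoc (π z) (z (Fin.last k)) = z := by
        funext j
        refine Fin.lastCases ?_ (fun j => ?_) j
        · rw [esnoc_last]
        · rw [esnoc_castSucc]; rfl
      rwa [this]
  have hvol_slice : ∀ y, volume (SZ y) = volume (S₀ y) +
      Set.indicator (π '' Z₀) (1 : (Fin k → ℝ) → ℝ≥0∞) y := by
    intro y
    by_cases hne : (S₀ y).Nonempty
    · have hmem : y ∈ π '' Z₀ := (hne_iff y).mp hne
      rw [Set.indicator_of_mem hmem, Pi.one_apply]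
      set a := sInf (S₀ y) with ha
      set b := sSup (S₀ y) with hb
      have hamem : a ∈ S₀ y := (hS₀comp y).sInf_mem hne
      have hbmem : b ∈ S₀ y := (hS₀comp y).sSup_mem hne
      have hicc : S₀ y = Set.Icc a b := by
        apply subset_antisymm
        · intro x hx
          exact ⟨csInf_le (hS₀comp y).bddBelow hx, le_csSup (hS₀comp y).bddAbove hx⟩
        · exact ((hS₀conv y).ordConnected).out hamem hbmem
      have hab : a ≤ b := le_csSup (hS₀comp y).bddAbove hamem
      rw [hslice y, hicc, Set.Icc_add_Icc hab zero_le_one, add_zero,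
        Real.volume_Icc, Real.volume_Icc]
      rw [show b + 1 - a = (b - a) + 1 by ring,
        ENNReal.ofReal_add (by linarith) zero_le_one, ENNReal.ofReal_one]
    · have hempty : S₀ y = ∅ := Set.not_nonempty_iff_eq_empty.mp hne
      have hmem : y ∉ π '' Z₀ := fun h => hne ((hne_iff y).mpr h)
      rw [Set.indicator_of_notMem hmem, hslice y, hempty, Set.empty_add]
      simp
  -- put everything together
  have hZ₀meas : MeasurableSet Z₀ := hcomp.isClosed.measurableSet
  have hZmeas : MeasurableSet Z := hZcomp.isClosed.measurableSet
  have hπZ₀meas : MeasurableSet (π '' Z₀) := (hcomp.image hπcont).isClosed.measurableSet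
  have hmeas_S₀ : Measurable fun y => volume (S₀ y) := by
    have h2 : MeasurableSet (F.symm ⁻¹' Z₀) := F.symm.measurable hZ₀meas
    have := measurable_measure_prodMk_right (μ := (volume : Measure ℝ)) h2
    convert this using 2 with y
    congr 1
    ext x
    simp only [hS₀, Set.mem_setOf_eq, Set.mem_preimage, hsymm x y]
  rw [hvol Z hZmeas, hvol Z₀ hZ₀meas]
  calc ∫⁻ y, volume {x : ℝ | esnoc y x ∈ Z}
      = ∫⁻ y, (volume (S₀ y) + Set.indicator (π '' Z₀) (1 : (Fin k → ℝ) → ℝ≥0∞) y) := by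
        exact lintegral_congr fun y => hvol_slice y
    _ = (∫⁻ y, volume (S₀ y)) + ∫⁻ y, Set.indicator (π '' Z₀) (1 : (Fin k → ℝ) → ℝ≥0∞) y := by
        exact lintegral_add_left hmeas_S₀ _
    _ = (∫⁻ y, volume (S₀ y)) + volume (π '' Z₀) := by
        rw [lintegral_indicator_one hπZ₀meas]

end CreditNet

namespace CreditNet

open MeasureTheory
open scoped ENNReal Pointwise

/-! ### Shear equivalences: normalizing a nonzero generator -/

noncomputable def shear {k : ℕ} (z : Fin (k+1) → ℝ) (hz : 1 + z (Fin.last k) ≠ 0) :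
    (Fin (k+1) → ℝ) ≃ₗ[ℝ] (Fin (k+1) → ℝ) :=
  LinearEquiv.ofLinear
    (LinearMap.id + (LinearMap.proj (Fin.last k)).smulRight z)
    (LinearMap.id + (LinearMap.proj (Fin.last k)).smulRight ((-(1 + z (Fin.last k))⁻¹) • z))
    (by
      ext y j
      simp only [LinearMap.coe_comp, Function.comp_apply, LinearMap.add_apply,
        LinearMap.id_coe, id_eq, LinearMap.smulRight_apply, LinearMap.proj_apply,
        Pi.add_apply, Pi.smul_apply, smul_eq_mul, LinearMap.id_apply]
      field_simp
      ring)
    (by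
      ext y j
      simp only [LinearMap.coe_comp, Function.comp_apply, LinearMap.add_apply,
        LinearMap.id_coe, id_eq, LinearMap.smulRight_apply, LinearMap.proj_apply,
        Pi.add_apply, Pi.smul_apply, smul_eq_mul, LinearMap.id_apply]
      field_simp
      ring)

lemma shear_apply {k : ℕ} (z : Fin (k+1) → ℝ) (hz : 1 + z (Fin.last k) ≠ 0)
    (x : Fin (k+1) → ℝ) : shear z hz x = x + x (Fin.last k) • z := by
  rfl

lemma exists_linEquiv_to_single {k : ℕ} (v : Fin (k+1) → ℝ) (hv : v ≠ 0) :
    ∃ T : (Fin (k+1) → ℝ) ≃ₗ[ℝ] (Fin (k+1) → ℝ),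
      T v = (Pi.single (Fin.last k) 1 : Fin (k+1) → ℝ) := by
  obtain ⟨i₀, hi₀⟩ := Function.ne_iff.mp hv
  simp only [Pi.zero_apply] at hi₀
  set u : Fin (k+1) → ℝ := Pi.single (Fin.last k) 1 with hu
  set T₁ : (Fin (k+1) → ℝ) ≃ₗ[ℝ] (Fin (k+1) → ℝ) :=
    LinearEquiv.funCongrLeft ℝ ℝ (Equiv.swap i₀ (Fin.last k)) with hT₁
  set w : Fin (k+1) → ℝ := T₁ v with hw
  have hwl : w (Fin.last k) = v i₀ := by
    simp [hw, hT₁, LinearEquiv.funCongrLeft, Equiv.swap_apply_right]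
  have hwl0 : w (Fin.last k) ≠ 0 := by rwa [hwl]
  set z : Fin (k+1) → ℝ := (w (Fin.last k))⁻¹ • (u - w) with hz
  have hzl : 1 + z (Fin.last k) = (w (Fin.last k))⁻¹ := by
    simp only [hz, Pi.smul_apply, Pi.sub_apply, smul_eq_mul, hu, Pi.single_eq_same]
    field_simp
    ring
  have hzl0 : 1 + z (Fin.last k) ≠ 0 := by
    rw [hzl]; exact inv_ne_zero hwl0
  refine ⟨T₁.trans (shear z hzl0), ?_⟩
  have : (T₁.trans (shear z hzl0)) v = shear z hzl0 w := rfl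
  rw [this, shear_apply, hz, smul_smul, mul_inv_cancel₀ hwl0, one_smul]
  abel

lemma adet_map {ι : Type} {n : ℕ} (T : (Fin n → ℝ) →ₗ[ℝ] (Fin n → ℝ))
    (g : ι → Fin n → ℝ) (S : Finset ι) :
    adet (fun i => T (g i)) S = |LinearMap.det T| * adet g S := by
  by_cases h : S.card = n
  · rw [adet, dif_pos h, adet, dif_pos h]
    have hmat : colMat (fun i => T (g i)) (fun j => (senum S h j).1)
        = (LinearMap.toMatrix' T) * colMat g (fun j => (senum S h j).1) := by
      ext i j
      rw [Matrix.mul_apply]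
      have : T (g ((senum S h j).1)) = (LinearMap.toMatrix' T).mulVec (g ((senum S h j).1)) := by
        rw [← Matrix.toLin'_apply, Matrix.toLin'_toMatrix']
      rw [colMat, Matrix.of_apply, this]
      simp [Matrix.mulVec, dotProduct, colMat]
    rw [hmat, Matrix.det_mul, abs_mul, LinearMap.det_toMatrix']
  · rw [adet, dif_neg h, adet, dif_neg h, mul_zero]

lemma adet_zero_col {ι : Type} [DecidableEq ι] {n : ℕ} {g : ι → Fin n → ℝ} {S : Finset ι}
    {a : ι} (haS : a ∈ S) (hga : g a = 0) : adet g S = 0 := by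
  rw [adet]
  split
  · rename_i h
    rw [abs_eq_zero]
    apply Matrix.det_eq_zero_of_column_eq_zero ((senum S h).symm ⟨a, haS⟩)
    intro i
    have : ((senum S h) ((senum S h).symm ⟨a, haS⟩)).1 = a := by
      rw [Equiv.apply_symm_apply]
    rw [colMat, Matrix.of_apply, this, hga]
    rfl
  · rfl

/-- Cofactor expansion: inserting a generator equal to the last standard basis
vector reduces the absolute determinant to the projected family. -/
lemma adet_insert_single {ι : Type} [DecidableEq ι] {k : ℕ} (g : ι → Fin (k+1) → ℝ)
    (a : ι) (S : Finset ι) (ha : a ∉ S) (hS : S.card = k)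
    (hga : g a = (Pi.single (Fin.last k) 1 : Fin (k+1) → ℝ)) :
    adet g (insert a S) = adet (fun i => (g i) ∘ Fin.castSucc) S := by
  have hcard : (insert a S).card = k + 1 := by
    rw [Finset.card_insert_of_notMem ha, hS]
  -- an enumeration of `insert a S` putting `a` last
  set τ : Fin (k+1) → ↥(insert a S) := fun j =>
    Fin.lastCases ⟨a, Finset.mem_insert_self a S⟩
      (fun j' => ⟨(senum S hS j').1, Finset.mem_insert_of_mem (senum S hS j').2⟩) j with hτ
  have hτlast : τ (Fin.last k) = ⟨a, Finset.mem_insert_self a S⟩ := by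
    simp [hτ, Fin.lastCases_last]
  have hτcast : ∀ j' : Fin k, τ (Fin.castSucc j')
      = ⟨(senum S hS j').1, Finset.mem_insert_of_mem (senum S hS j').2⟩ := by
    intro j'; simp [hτ, Fin.lastCases_castSucc]
  have hinj : Function.Injective τ := by
    intro j1 j2
    induction j1 using Fin.lastCases with
    | last =>
      induction j2 using Fin.lastCases with
      | last => intro _; rfl
      | cast i2 =>
        intro hj
        rw [hτlast, hτcast i2] at hj
        have hval : a = ((senum S hS) i2).1 := congrArg (Subtype.val : ↥(insert a S) → ι) hj
        exact absurd (by rw [hval]; exact ((senum S hS) i2).2) ha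
    | cast i1 =>
      induction j2 using Fin.lastCases with
      | last =>
        intro hj
        rw [hτlast, hτcast i1] at hj
        have hval : ((senum S hS) i1).1 = a := congrArg (Subtype.val : ↥(insert a S) → ι) hj
        exact absurd (by rw [← hval]; exact ((senum S hS) i1).2) ha
      | cast i2 =>
        intro hj
        rw [hτcast i1, hτcast i2] at hj
        have hval : ((senum S hS) i1).1 = ((senum S hS) i2).1 := congrArg (Subtype.val : ↥(insert a S) → ι) hj
        have heq : i1 = i2 := (senum S hS).injective (Subtype.ext hval)
        rw [heq]
  have hbij : Function.Bijective τ := by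
    refine (Fintype.bijective_iff_injective_and_card τ).mpr ⟨hinj, ?_⟩
    rw [Fintype.card_fin, Fintype.card_coe, hcard]
  set σ : Fin (k+1) ≃ ↥(insert a S) := Equiv.ofBijective τ hbij with hσ
  have hσapp : ∀ j, (σ j).1 = (τ j).1 := fun j => rfl
  rw [adet_eq g (insert a S) hcard σ]
  set M := colMat g (fun j => (σ j).1) with hM
  have hMlast : ∀ i, M i (Fin.last k) = (Pi.single (Fin.last k) 1 : Fin (k+1) → ℝ) i := by
    intro i
    rw [hM, colMat, Matrix.of_apply, hσapp, hτlast, ← hga]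
  have hdet : M.det = (M.submatrix (Fin.last k).succAbove (Fin.last k).succAbove).det := by
    rw [Matrix.det_succ_column M (Fin.last k)]
    rw [Finset.sum_eq_single (Fin.last k)]
    · rw [hMlast (Fin.last k), Pi.single_eq_same]
      have : ((-1 : ℝ)) ^ ((Fin.last k : ℕ) + (Fin.last k : ℕ)) = 1 :=
        Even.neg_one_pow ⟨(Fin.last k : ℕ), rfl⟩
      rw [this, one_mul, one_mul]
    · intro i _ hi
      rw [hMlast i, Pi.single_eq_of_ne hi, mul_zero, zero_mul]
    · intro h; exact absurd (Finset.mem_univ _) h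
  have hminor : M.submatrix (Fin.last k).succAbove (Fin.last k).succAbove
      = colMat (fun i => (g i) ∘ Fin.castSucc) (fun j => (senum S hS j).1) := by
    ext i j
    rw [Matrix.submatrix_apply, Fin.succAbove_last, hM, colMat, Matrix.of_apply,
      hσapp, hτcast j, colMat, Matrix.of_apply]
    rfl
  rw [hdet, hminor, adet, dif_pos hS]

end CreditNet

namespace CreditNet

open MeasureTheory
open scoped ENNReal Pointwise

lemma zonoA_zero_dim {ι : Type} [Fintype ι] (g : ι → Fin 0 → ℝ) (A : Finset ι) :
    volume (zonoA g A) = ∑ S ∈ A.powersetCard 0, ENNReal.ofReal (adet g S) := by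
  have hz : zonoA g A = Set.univ := by
    ext z
    simp only [Set.mem_univ, iff_true]
    exact ⟨fun _ => 0, fun i => ⟨le_refl 0, zero_le_one⟩, Subsingleton.elim _ _⟩
  rw [hz, Finset.powersetCard_zero, Finset.sum_singleton, adet, dif_pos (Finset.card_empty),
    show (Set.univ : Set (Fin 0 → ℝ)) = Set.univ.pi (fun _ => Set.univ) by rw [Set.pi_univ],
    volume_pi_pi]
  simp [Matrix.det_fin_zero]

theorem zono_volume {ι : Type} [Fintype ι] [DecidableEq ι] (A : Finset ι) :
    ∀ {n : ℕ} (g : ι → Fin n → ℝ),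
      volume (zonoA g A) = ∑ S ∈ A.powersetCard n, ENNReal.ofReal (adet g S) := by
  induction A using Finset.induction_on with
  | empty =>
    intro n g
    match n with
    | 0 => exact zonoA_zero_dim g ∅
    | (k+1) =>
      have hz : zonoA g ∅ = {0} := by
        ext z
        simp only [Set.mem_singleton_iff]
        constructor
        · rintro ⟨lam, _, rfl⟩; exact Finset.sum_empty
        · rintro rfl
          exact ⟨fun _ => 0, fun i => ⟨le_refl 0, zero_le_one⟩, Finset.sum_empty.symm⟩
      have hps : (∅ : Finset ι).powersetCard (k+1) = ∅ :=
        Finset.powersetCard_eq_empty.mpr (by simp)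
      rw [hz, hps, Finset.sum_empty,
        show ({0} : Set (Fin (k+1) → ℝ)) = Set.univ.pi (fun _ => ({0} : Set ℝ)) by
          ext z; simp [funext_iff], volume_pi_pi]
      simp [Real.volume_singleton]
  | @insert a A₀ ha IH =>
    intro n g
    match n with
    | 0 => exact zonoA_zero_dim g _
    | (k+1) =>
      have hdisj : Disjoint (A₀.powersetCard (k+1)) ((A₀.powersetCard k).image (insert a)) := by
        rw [Finset.disjoint_left]
        intro S hS1 hS2
        obtain ⟨hsub, _⟩ := Finset.mem_powersetCard.mp hS1
        obtain ⟨S', hS', rfl⟩ := Finset.mem_image.mp hS2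
        exact ha (hsub (Finset.mem_insert_self a S'))
      have hinj : ∀ x ∈ A₀.powersetCard k, ∀ y ∈ A₀.powersetCard k,
          insert a x = insert a y → x = y := by
        intro x hx y hy hxy
        have hax : a ∉ x := fun h => ha ((Finset.mem_powersetCard.mp hx).1 h)
        have hay : a ∉ y := fun h => ha ((Finset.mem_powersetCard.mp hy).1 h)
        rw [← Finset.erase_insert hax, ← Finset.erase_insert hay, hxy]
      by_cases hga : g a = 0
      · have hz : zonoA g (insert a A₀) = zonoA g A₀ := by
          ext z
          constructor
          · rintro ⟨lam, h1, rfl⟩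
            exact ⟨lam, h1, by rw [Finset.sum_insert ha, hga, smul_zero, zero_add]⟩
          · rintro ⟨lam, h1, rfl⟩
            exact ⟨lam, h1, by rw [Finset.sum_insert ha, hga, smul_zero, zero_add]⟩
        rw [hz, IH g, Finset.powersetCard_succ_insert ha, Finset.sum_union hdisj,
          Finset.sum_image hinj]
        have : ∑ S ∈ A₀.powersetCard k, ENNReal.ofReal (adet g (insert a S)) = 0 := by
          refine Finset.sum_eq_zero fun S _ => ?_
          rw [adet_zero_col (Finset.mem_insert_self a S) hga, ENNReal.ofReal_zero]
        rw [this, add_zero]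
      · obtain ⟨T, hT⟩ := exists_linEquiv_to_single (g a) hga
        set g' : ι → Fin (k+1) → ℝ := fun i => T (g i) with hg'
        have hg'a : g' a = (Pi.single (Fin.last k) 1 : Fin (k+1) → ℝ) := hT
        -- volume identity for g'
        have hset : zonoA g' (insert a A₀) = {z | ∃ s ∈ Set.Icc (0:ℝ) 1,
            ∃ z₀ ∈ zonoA g' A₀, z = z₀ + s • (Pi.single (Fin.last k) 1 : Fin (k+1) → ℝ)} := by
          rw [zonoA_insert ha]
          simp only [hg'a]
        have hπ : (fun z : Fin (k+1) → ℝ => z ∘ Fin.castSucc) '' zonoA g' A₀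
            = zonoA (fun i => (g' i) ∘ Fin.castSucc) A₀ :=
          zonoA_image_linear (LinearMap.funLeft ℝ ℝ Fin.castSucc) g' A₀
        have hvol' : volume (zonoA g' (insert a A₀))
            = ∑ S ∈ (insert a A₀).powersetCard (k+1), ENNReal.ofReal (adet g' S) := by
          rw [hset, volume_add_segment _ (convex_zonoA g' A₀) (isCompact_zonoA g' A₀), hπ,
            IH g', IH (fun i => (g' i) ∘ Fin.castSucc),
            Finset.powersetCard_succ_insert ha, Finset.sum_union hdisj,
            Finset.sum_image hinj]
          congr 1
          refine Finset.sum_congr rfl fun S hS => ?_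
          obtain ⟨hsub, hcard⟩ := Finset.mem_powersetCard.mp hS
          rw [adet_insert_single g' a S (fun h => ha (hsub h)) hcard hg'a]
        -- transfer to g
        have himg : zonoA g' (insert a A₀) = ⇑(T.toLinearMap) '' zonoA g (insert a A₀) :=
          (zonoA_image_linear T.toLinearMap g (insert a A₀)).symm
        have hvolT : volume (zonoA g' (insert a A₀))
            = ENNReal.ofReal |LinearMap.det T.toLinearMap| * volume (zonoA g (insert a A₀)) := by
          rw [himg]
          exact Measure.addHaar_image_linearMap volume T.toLinearMap _
        set d := |LinearMap.det T.toLinearMap| with hd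
        have hdnn : (0:ℝ) ≤ d := abs_nonneg _
        have hd0 : d ≠ 0 := abs_ne_zero.mpr (LinearEquiv.isUnit_det' T).ne_zero
        have hadet : ∀ S : Finset ι, adet g' S = d * adet g S := fun S =>
          adet_map T.toLinearMap g S
        have hsum : ∑ S ∈ (insert a A₀).powersetCard (k+1), ENNReal.ofReal (adet g' S)
            = ENNReal.ofReal d * ∑ S ∈ (insert a A₀).powersetCard (k+1),
                ENNReal.ofReal (adet g S) := by
          rw [Finset.mul_sum]
          refine Finset.sum_congr rfl fun S _ => ?_
          rw [hadet S, ENNReal.ofReal_mul hdnn]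
        rw [hsum, hvolT] at hvol'
        have hne0 : ENNReal.ofReal d ≠ 0 := by
          intro h
          exact hd0 (le_antisymm (ENNReal.ofReal_eq_zero.mp h) hdnn)
        exact (ENNReal.mul_right_inj hne0 ENNReal.ofReal_ne_top).mp hvol'

end CreditNet

open CreditNet

/-- the volume of the configuration zonotope equals the weighted
spanning tree polynomial evaluated at the capacities. -/
theorem stmt8 {V E : Type} [Fintype V] [Fintype E] [DecidableEq E]
    (fst snd : E → V) (n : ℕ) (hcard : Fintype.card V = n + 1)
    (hconn : ConnVia fst snd Finset.univ NoRel)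
    (c : E → ℝ) (hc : ∀ e, 0 ≤ c e)
    (D : E → Fin n → ℝ) (hD : IsSpanningRep fst snd D)
    (T0 : Finset E) (hT0 : IsSTree fst snd NoRel T0)
    (t : Fin n → E) (ht : Function.Injective t)
    (htT : ∀ i, t i ∈ T0) (hTt : ∀ e ∈ T0, ∃ i, t i = e)
    (hbasis : ∀ i : Fin n, D (t i) = Pi.single i 1) :
    MeasureTheory.volume (zonotope (fun e : E => c e • D e)) =
      ENNReal.ofReal (treePoly fst snd NoRel c) := by
  classical
  obtain ⟨hD1, hD2⟩ := hD
  have hDEq : @IsSTree V E (fun a b => Classical.propDecidable (a = b)) fst snd NoRel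
      = @IsSTree V E _ fst snd NoRel :=
    congrArg (fun (i : DecidableEq E) => @IsSTree V E i fst snd NoRel)
      (Subsingleton.elim _ _)
  rw [hDEq] at hD2
  have hzono : zonotope (fun e : E => c e • D e) = zonoA (fun e => c e • D e) Finset.univ := rfl
  rw [hzono, zono_volume Finset.univ (fun e => c e • D e)]
  have hiff := istree_iff (D := D) hconn hD1 hD2 hT0.1 hTt hbasis
  have hterm : ∀ S ∈ Finset.univ.powersetCard n,
      ENNReal.ofReal (adet (fun e => c e • D e) S)
        = if IsSTree fst snd NoRel S then ENNReal.ofReal (∏ e ∈ S, c e) else 0 := by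
    intro S hS
    have hScard : S.card = n := (Finset.mem_powersetCard.mp hS).2
    rw [adet_smul c hc D S]
    by_cases htree : IsSTree fst snd NoRel S
    · rw [if_pos htree,
        adet_tree_eq_one hD1 hT0.1 hTt hbasis S hScard htree.1, mul_one]
    · rw [if_neg htree]
      have hnspan : Submodule.span ℝ (D '' ↑S) ≠ ⊤ := fun h =>
        htree ((hiff S).mpr ⟨hScard, h⟩)
      rw [adet_eq_zero_of_not_span S hScard hnspan, mul_zero, ENNReal.ofReal_zero]
  rw [Finset.sum_congr rfl hterm, ← Finset.sum_filter]
  have hsets : (Finset.univ.powersetCard n).filter (fun S => IsSTree fst snd NoRel S)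
      = Finset.univ.filter (fun S : Finset E => IsSTree fst snd NoRel S) := by
    ext S
    simp only [Finset.mem_filter, Finset.mem_powersetCard, Finset.mem_univ, true_and]
    constructor
    · rintro ⟨_, h⟩; exact h
    · intro h; exact ⟨⟨Finset.subset_univ S, ((hiff S).mp h).1⟩, h⟩
  rw [hsets]
  have htp : treePoly fst snd NoRel c
      = ∑ T ∈ Finset.univ.filter (fun S : Finset E => IsSTree fst snd NoRel S),
          ∏ e ∈ T, c e := by
    rw [treePoly]
    simp only [hDEq, Finset.filter_congr_decidable]
  rw [htp, ENNReal.ofReal_sum_of_nonneg fun T _ => Finset.prod_nonneg fun e _ => hc e]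
end

section
/- (Uniform measure is stationary under symmetric transactions) Let Z ⊂ ℝ^n be a compact convex body, and consider the Markov transition kernel that, from state z, samples a direction u from a finite set X' of vectors (with probabilities φ) and a size c from a distribution k_u that is symmetric about 0, then moves to z − c·u if z − c·u ∈ Z and stays at z otherwise. Then the uniform (normalized Lebesgue) measure on Z is invariant for this kernel. Key step: for any measurable A ⊆ Z and any fixed vector v, μ(A_v^1) + μ(A_v^2) + μ(A_{−v}^1) + μ(A_{−v}^2) = 2μ(A), where A_v^1 = {z ∈ Z : z − v ∈ A} and A_v^2 = {z ∈ A : z − v ∉ Z} and μ is Lebesgue measure. -/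
open MeasureTheory

private lemma keyAux {n : ℕ} (Z A : Set (Fin n → ℝ)) (hZ : MeasurableSet Z)
    (hA : MeasurableSet A) (hAZ : A ⊆ Z) (v : Fin n → ℝ) :
    volume { z ∈ Z | z - v ∈ A } + volume { z ∈ A | z + v ∉ Z } = volume A := by
  have h1 : { z ∈ Z | z - v ∈ A } = (fun z => z + (-v)) ⁻¹' { w ∈ A | w + v ∈ Z } := by
    ext z
    simp only [Set.mem_setOf_eq, Set.mem_preimage, ← sub_eq_add_neg]
    constructor
    · rintro ⟨hz, ha⟩; exact ⟨ha, by simpa using hz⟩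
    · rintro ⟨ha, hz⟩; exact ⟨by simpa using hz, ha⟩
  have hm1 : MeasurableSet { w ∈ A | w + v ∈ Z } :=
    hA.inter ((measurable_id.add_const v) hZ)
  have hm2 : MeasurableSet { w ∈ A | w + v ∉ Z } :=
    hA.inter ((measurable_id.add_const v) hZ.compl)
  have hdisj : Disjoint { w ∈ A | w + v ∈ Z } { w ∈ A | w + v ∉ Z } := by
    rw [Set.disjoint_left]; rintro w ⟨_, h⟩ ⟨_, h'⟩; exact h' h
  have hunion : { w ∈ A | w + v ∈ Z } ∪ { w ∈ A | w + v ∉ Z } = A := by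
    ext w; by_cases h : w + v ∈ Z <;> simp [h]
  rw [h1, measure_preimage_add_right, ← measure_union hdisj hm2, hunion]

/-- the uniform measure on a compact convex body `Z` is invariant
for the Markov kernel that samples a direction `x i` with probability `φ i` and
a size `t` from a distribution `κ i` symmetric about `0`, then moves from `z`
to `z − t • x i` if that point lies in `Z` and stays at `z` otherwise.
Key step: `μ(A_v¹) + μ(A_v²) + μ(A_{−v}¹) + μ(A_{−v}²) = 2μ(A)`. -/
theorem stmt19 {n m : ℕ} (Z : Set (Fin n → ℝ))
    (hZc : IsCompact Z) (hZconv : Convex ℝ Z) (hZvol : 0 < volume Z)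
    (x : Fin m → Fin n → ℝ)
    (φ : Fin m → ℝ) (hφ : ∀ i, 0 ≤ φ i) (hφ1 : ∑ i, φ i = 1)
    (κ : Fin m → Measure ℝ) (hκ : ∀ i, IsProbabilityMeasure (κ i))
    (hsym : ∀ i, (κ i).map (fun s => -s) = κ i) :
    (∀ A : Set (Fin n → ℝ), MeasurableSet A → A ⊆ Z →
      volume A = ∑ i, ENNReal.ofReal (φ i) *
        ∫⁻ s, volume { z ∈ Z |
          (z - s • x i ∈ Z ∧ z - s • x i ∈ A) ∨ (z - s • x i ∉ Z ∧ z ∈ A) }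
          ∂(κ i)) ∧
    (∀ A : Set (Fin n → ℝ), MeasurableSet A → A ⊆ Z → ∀ v : Fin n → ℝ,
      volume { z ∈ Z | z - v ∈ A } + volume { z ∈ A | z - v ∉ Z } +
        volume { z ∈ Z | z + v ∈ A } + volume { z ∈ A | z + v ∉ Z } =
      2 * volume A) := by
  have hZ : MeasurableSet Z := hZc.measurableSet
  -- the key identity
  have key : ∀ A : Set (Fin n → ℝ), MeasurableSet A → A ⊆ Z → ∀ v : Fin n → ℝ,
      volume { z ∈ Z | z - v ∈ A } + volume { z ∈ A | z - v ∉ Z } +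
        volume { z ∈ Z | z + v ∈ A } + volume { z ∈ A | z + v ∉ Z } =
      2 * volume A := by
    intro A hA hAZ v
    have k1 := keyAux Z A hZ hA hAZ v
    have k2 := keyAux Z A hZ hA hAZ (-v)
    simp only [sub_neg_eq_add, ← sub_eq_add_neg] at k2
    calc volume { z ∈ Z | z - v ∈ A } + volume { z ∈ A | z - v ∉ Z } +
          volume { z ∈ Z | z + v ∈ A } + volume { z ∈ A | z + v ∉ Z }
        = (volume { z ∈ Z | z - v ∈ A } + volume { z ∈ A | z + v ∉ Z }) +
          (volume { z ∈ Z | z + v ∈ A } + volume { z ∈ A | z - v ∉ Z }) := by ring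
      _ = volume A + volume A := by rw [k1, k2]
      _ = 2 * volume A := by ring
  refine ⟨?_, key⟩
  intro A hA hAZ
  have hAfin : volume A ≠ ⊤ :=
    ne_top_of_le_ne_top hZc.measure_lt_top.ne (measure_mono hAZ)
  have hmain : ∀ i, (∫⁻ s, volume { z ∈ Z |
      (z - s • x i ∈ Z ∧ z - s • x i ∈ A) ∨ (z - s • x i ∉ Z ∧ z ∈ A) } ∂(κ i))
      = volume A := by
    intro i
    haveI := hκ i
    set g : ℝ → ENNReal := fun s => volume { z ∈ Z |
      (z - s • x i ∈ Z ∧ z - s • x i ∈ A) ∨ (z - s • x i ∉ Z ∧ z ∈ A) } with hg_def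
    -- measurability of g
    have hT : MeasurableSet { p : ℝ × (Fin n → ℝ) | p.2 ∈ Z ∧
        ((p.2 - p.1 • x i ∈ Z ∧ p.2 - p.1 • x i ∈ A) ∨
          (p.2 - p.1 • x i ∉ Z ∧ p.2 ∈ A)) } := by
      have hf : Measurable fun p : ℝ × (Fin n → ℝ) => p.2 - p.1 • x i := by
        exact (measurable_snd.sub (measurable_fst.smul_const (x i)))
      exact (measurable_snd hZ).inter
        (((hf hZ).inter (hf hA)).union ((hf hZ.compl).inter (measurable_snd hA)))
    have hgm : Measurable g := by
      have := measurable_measure_prodMk_left (ν := (volume : Measure (Fin n → ℝ))) hT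
      exact this
    -- pointwise: g s + g (-s) = 2 * volume A
    have hpt : ∀ s : ℝ, g s + g (-s) = 2 * volume A := by
      intro s
      have hsplit : ∀ v : Fin n → ℝ,
          volume { z ∈ Z | (z - v ∈ Z ∧ z - v ∈ A) ∨ (z - v ∉ Z ∧ z ∈ A) } =
          volume { z ∈ Z | z - v ∈ A } + volume { z ∈ A | z - v ∉ Z } := by
        intro v
        have he : { z ∈ Z | (z - v ∈ Z ∧ z - v ∈ A) ∨ (z - v ∉ Z ∧ z ∈ A) } =
            { z ∈ Z | z - v ∈ A } ∪ { z ∈ A | z - v ∉ Z } := by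
          ext z
          simp only [Set.mem_setOf_eq, Set.mem_union]
          constructor
          · rintro ⟨hz, h | h⟩
            · exact Or.inl ⟨hz, h.2⟩
            · exact Or.inr ⟨h.2, h.1⟩
          · rintro (⟨hz, h⟩ | ⟨hz, h⟩)
            · exact ⟨hz, Or.inl ⟨hAZ h, h⟩⟩
            · exact ⟨hAZ hz, Or.inr ⟨h, hz⟩⟩
        have hm1 : MeasurableSet { z ∈ A | z - v ∉ Z } :=
          hA.inter ((measurable_id.sub_const v) hZ.compl)
        have hdis : Disjoint { z ∈ Z | z - v ∈ A } { z ∈ A | z - v ∉ Z } := by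
          rw [Set.disjoint_left]
          rintro z ⟨_, h⟩ ⟨_, h'⟩
          exact h' (hAZ h)
        rw [he, measure_union hdis hm1]
      have h1 := hsplit (s • x i)
      have h2 := hsplit ((-s) • x i)
      have hv : (-s) • x i = -(s • x i) := by simp [neg_smul]
      rw [hv] at h2
      simp only [sub_neg_eq_add] at h2
      have := key A hA hAZ (s • x i)
      calc g s + g (-s)
          = volume { z ∈ Z | z - s • x i ∈ A } + volume { z ∈ A | z - s • x i ∉ Z } +
            (volume { z ∈ Z | z + s • x i ∈ A } + volume { z ∈ A | z + s • x i ∉ Z }) := by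
            rw [hg_def]
            simp only [hv]
            rw [h1]
            simp only [sub_neg_eq_add] at h2 ⊢
            rw [h2]
        _ = 2 * volume A := by rw [← this]; ring
    -- symmetry: ∫ g(-s) = ∫ g(s)
    have hsymint : (∫⁻ s, g (-s) ∂(κ i)) = ∫⁻ s, g s ∂(κ i) := by
      conv_rhs => rw [← hsym i]
      rw [lintegral_map hgm measurable_neg]
    have h2int : (∫⁻ s, (g s + g (-s)) ∂(κ i)) = 2 * volume A := by
      simp only [hpt]
      rw [lintegral_const, measure_univ, mul_one]
    rw [lintegral_add_left hgm, hsymint] at h2int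
    have : (2 : ENNReal) * ∫⁻ s, g s ∂(κ i) = 2 * volume A := by
      rw [two_mul, h2int]
    exact (ENNReal.mul_right_inj (by norm_num) (by norm_num)).mp this
  calc volume A = (∑ i, ENNReal.ofReal (φ i)) * volume A := by
        rw [← ENNReal.ofReal_sum_of_nonneg (fun i _ => hφ i), hφ1, ENNReal.ofReal_one, one_mul]
    _ = ∑ i, ENNReal.ofReal (φ i) * volume A := by rw [Finset.sum_mul]
    _ = _ := by
        refine Finset.sum_congr rfl fun i _ => ?_
        rw [hmain i]
end
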